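/- arXiv:2012.12137 — 10 statements merged into one kernel-verified Lean document; each statement's English description precedes it below -/
import Mathlib

section
/- Let ω > 0, let ξ ∈ (0,1), and let D > 0 satisfy D·ω ≤ 1. Define h : ℝ → ℝ by h(x) = e^{−xωξ}·sin(xω√(1−ξ²))/(ω√(1−ξ²)). Then h(0) = 0, h'(0) = 1, h satisfies the simple harmonic oscillator equation ω²·h(x) + 2ξω·h'(x) + h''(x) = 0 for all x ∈ ℝ, and for every x ∈ [0, D] one has h'(x) > 0, while for every x ∈ (0, D] one has h''(x) < 0 and moreover h''(0) = −2ξω < 0. -/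
set_option maxHeartbeats 1000000


/-- **Underdamped harmonic oscillator solution.**
Let `ω > 0`, `ξ ∈ (0,1)`, `D > 0` with `D·ω ≤ 1`.  Define
`h x = exp (-(x ω ξ)) · sin (x ω √(1-ξ²)) / (ω √(1-ξ²))`.  Then `h 0 = 0`, `h' 0 = 1`,
`h` satisfies the simple harmonic oscillator equation `ω² h + 2ξω h' + h'' = 0` on all of `ℝ`,
`h' > 0` on `[0, D]`, `h'' < 0` on `(0, D]`, and `h'' 0 = -2ξω < 0`. -/
theorem stmt0 (ω ξ D : ℝ) (hω : 0 < ω) (hξ : ξ ∈ Set.Ioo (0 : ℝ) 1) (hD : 0 < D)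
    (hDω : D * ω ≤ 1)
    (h : ℝ → ℝ)
    (hdef : ∀ x : ℝ, h x =
      Real.exp (-(x * ω * ξ)) * Real.sin (x * ω * Real.sqrt (1 - ξ ^ 2)) /
        (ω * Real.sqrt (1 - ξ ^ 2))) :
    h 0 = 0 ∧ deriv h 0 = 1 ∧
    (∀ x : ℝ, ω ^ 2 * h x + 2 * ξ * ω * deriv h x + deriv (deriv h) x = 0) ∧
    (∀ x ∈ Set.Icc (0 : ℝ) D, 0 < deriv h x) ∧
    (∀ x ∈ Set.Ioc (0 : ℝ) D, deriv (deriv h) x < 0) ∧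
    deriv (deriv h) 0 = -(2 * ξ * ω) ∧ -(2 * ξ * ω) < 0 := by
  obtain ⟨hξ0, hξ1⟩ := hξ
  have h1ξ : (0:ℝ) < 1 - ξ ^ 2 := by nlinarith
  set s := Real.sqrt (1 - ξ ^ 2) with hs
  have hs2 : s ^ 2 = 1 - ξ ^ 2 := Real.sq_sqrt h1ξ.le
  have hspos : 0 < s := Real.sqrt_pos.mpr h1ξ
  have hsle : s ≤ 1 := by
    rw [hs]
    calc Real.sqrt (1 - ξ ^ 2) ≤ Real.sqrt 1 := by
          apply Real.sqrt_le_sqrt; nlinarith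
      _ = 1 := Real.sqrt_one
  set b := ω * s with hbdef
  have hb : 0 < b := mul_pos hω hspos
  have hbne : b ≠ 0 := hb.ne'
  set g1 : ℝ → ℝ := fun x =>
    Real.exp (-(x * ω * ξ)) * (b * Real.cos (x * b) - ω * ξ * Real.sin (x * b)) / b
    with hg1
  set g2 : ℝ → ℝ := fun x =>
    Real.exp (-(x * ω * ξ)) *
      ((ω * ξ) ^ 2 * Real.sin (x * b) - b ^ 2 * Real.sin (x * b)
        - 2 * (ω * ξ) * b * Real.cos (x * b)) / b with hg2
  have heq : h = fun x => Real.exp (-(x * ω * ξ)) * Real.sin (x * b) / b := by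
    funext y
    rw [hdef y, hbdef]
    ring_nf
  have e1 : ∀ x : ℝ, HasDerivAt (fun x : ℝ => Real.exp (-(x * ω * ξ)))
      (Real.exp (-(x * ω * ξ)) * -(ω * ξ)) x := by
    intro x
    exact HasDerivAt.exp ((((hasDerivAt_id' x).mul_const ω).mul_const ξ).neg.congr_deriv (by ring))
  have e3 : ∀ x : ℝ, HasDerivAt (fun x : ℝ => x * b) b x := fun x => by
    simpa using (hasDerivAt_id x).mul_const b
  have hd1 : ∀ x : ℝ, HasDerivAt h (g1 x) x := by
    intro x
    rw [heq]
    have := ((e1 x).mul (e3 x).sin).div_const b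
    refine this.congr_deriv ?_
    rw [hg1]
    ring
  have hd2 : ∀ x : ℝ, HasDerivAt g1 (g2 x) x := by
    intro x
    have e4 : HasDerivAt (fun x : ℝ => b * Real.cos (x * b) - ω * ξ * Real.sin (x * b))
        (b * (-Real.sin (x * b) * b) - ω * ξ * (Real.cos (x * b) * b)) x :=
      ((e3 x).cos.const_mul b).sub ((e3 x).sin.const_mul (ω * ξ))
    have := ((e1 x).mul e4).div_const b
    refine this.congr_deriv ?_
    rw [hg2]
    ring
  have Dh : deriv h = g1 := funext fun x => (hd1 x).deriv
  have DDh : deriv (deriv h) = g2 := by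
    rw [Dh]; exact funext fun x => (hd2 x).deriv
  have h0 : h 0 = 0 := by rw [hdef]; simp
  have dh0 : deriv h 0 = 1 := by
    rw [Dh, hg1]; simp [hbne]
  have ode : ∀ x : ℝ, ω ^ 2 * h x + 2 * ξ * ω * deriv h x + deriv (deriv h) x = 0 := by
    intro x
    rw [DDh, Dh, heq, hg1, hg2]
    simp only []
    have hb2 : b ^ 2 = ω ^ 2 * (1 - ξ ^ 2) := by rw [hbdef, mul_pow, hs2]
    field_simp
    ring_nf
    rw [hb2]
    ring
  have hpos : ∀ x ∈ Set.Icc (0 : ℝ) D, 0 < deriv h x := by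
    intro x ⟨hx0, hxD⟩
    rw [Dh, hg1]
    apply div_pos _ hb
    apply mul_pos (Real.exp_pos _)
    have hxb : 0 ≤ x * b := mul_nonneg hx0 hb.le
    have hsinle : Real.sin (x * b) ≤ x * b := Real.sin_le hxb
    have hcosge : 1 - (x * b) ^ 2 / 2 ≤ Real.cos (x * b) := Real.one_sub_sq_div_two_le_cos
    have ht : x * ω ≤ 1 := le_trans (by nlinarith) hDω
    have htnn : 0 ≤ x * ω := mul_nonneg hx0 hω.le
    -- need: ω*ξ*sin(xb) < b*cos(xb)
    have key : ω * ξ * (x * b) + b * ((x * b) ^ 2 / 2) < b := by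
      rw [hbdef]
      have : (x * ω) ^ 2 * s ^ 2 / 2 + ξ * (x * ω) < 1 := by
        rw [hs2]
        nlinarith [sq_nonneg (1 - ξ * (x * ω)), sq_nonneg (x * ω), mul_nonneg (mul_nonneg htnn hξ0.le) (sub_nonneg.mpr ht)]
      linarith [mul_lt_mul_of_pos_left this (mul_pos hω hspos)]
    have h1 : ω * ξ * Real.sin (x * b) ≤ ω * ξ * (x * b) := by
      apply mul_le_mul_of_nonneg_left hsinle (by positivity)
    linarith [mul_le_mul_of_nonneg_left hcosge hb.le, h1, key]
  refine ⟨h0, dh0, ode, hpos, ?_, ?_, by nlinarith⟩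
  · intro x ⟨hx0, hxD⟩
    have hh : 0 < h x := by
      rw [heq]
      apply div_pos _ hb
      apply mul_pos (Real.exp_pos _)
      apply Real.sin_pos_of_pos_of_lt_pi (mul_pos hx0 hb)
      have : x * b ≤ 1 := by
        calc x * b = (x * ω) * s := by rw [hbdef]; ring
          _ ≤ (x * ω) * 1 := by
              apply mul_le_mul_of_nonneg_left hsle (by positivity)
          _ ≤ 1 := by
              rw [mul_one]; exact le_trans (by nlinarith) hDω
      linarith [Real.pi_gt_three]
    have hd : 0 < deriv h x := hpos x ⟨hx0.le, hxD⟩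
    have := ode x
    nlinarith [mul_pos (mul_pos hξ0 hω) hd, mul_pos (pow_pos hω 2) hh]
  · have := ode 0
    rw [h0, dh0] at this
    linarith
end

section
/- Let ω > 0, let ξ > 1, and let D > 0 satisfy tanh(Dω√(ξ²−1)) < √(ξ²−1)/ξ. Define h : ℝ → ℝ by h(x) = e^{−xωξ}·sinh(xω√(ξ²−1))/(ω√(ξ²−1)). Then h(0) = 0, h'(0) = 1, h satisfies ω²·h(x) + 2ξω·h'(x) + h''(x) = 0 for all x ∈ ℝ, and for every x ∈ [0, D] one has h'(x) > 0, while for every x ∈ (0, D] one has h''(x) < 0 and moreover h''(0) = −2ξω < 0. -/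
/-- **Overdamped harmonic oscillator solution.**
Let `ω > 0`, `ξ > 1`, `D > 0` with `tanh (D ω √(ξ²-1)) < √(ξ²-1)/ξ`.  Define
`h x = exp (-(x ω ξ)) · sinh (x ω √(ξ²-1)) / (ω √(ξ²-1))`.  Then `h 0 = 0`, `h' 0 = 1`,
`h` satisfies the simple harmonic oscillator equation `ω² h + 2ξω h' + h'' = 0` on all of `ℝ`,
`h' > 0` on `[0, D]`, `h'' < 0` on `(0, D]`, and `h'' 0 = -2ξω < 0`. -/
theorem stmt1 (ω ξ D : ℝ) (hω : 0 < ω) (hξ : 1 < ξ) (hD : 0 < D)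
    (hDω : Real.tanh (D * ω * Real.sqrt (ξ ^ 2 - 1)) < Real.sqrt (ξ ^ 2 - 1) / ξ)
    (h : ℝ → ℝ)
    (hdef : ∀ x : ℝ, h x =
      Real.exp (-(x * ω * ξ)) * Real.sinh (x * ω * Real.sqrt (ξ ^ 2 - 1)) /
        (ω * Real.sqrt (ξ ^ 2 - 1))) :
    h 0 = 0 ∧ deriv h 0 = 1 ∧
    (∀ x : ℝ, ω ^ 2 * h x + 2 * ξ * ω * deriv h x + deriv (deriv h) x = 0) ∧
    (∀ x ∈ Set.Icc (0 : ℝ) D, 0 < deriv h x) ∧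
    (∀ x ∈ Set.Ioc (0 : ℝ) D, deriv (deriv h) x < 0) ∧
    deriv (deriv h) 0 = -(2 * ξ * ω) ∧ -(2 * ξ * ω) < 0 := by
  have hξ0 : (0:ℝ) < ξ := by linarith
  have hs2pos : (0:ℝ) < ξ ^ 2 - 1 := by nlinarith
  set s := Real.sqrt (ξ ^ 2 - 1) with hsdef
  have hspos : 0 < s := Real.sqrt_pos.mpr hs2pos
  have hs2 : s ^ 2 = ξ ^ 2 - 1 := Real.sq_sqrt hs2pos.le
  have hωs : ω * s ≠ 0 := by positivity
  have hh : h = fun x => Real.exp (-(x * ω * ξ)) * Real.sinh (x * ω * s) / (ω * s) :=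
    funext hdef
  have e1 : ∀ x : ℝ, HasDerivAt (fun x : ℝ => -(x * ω * ξ)) (-(ω * ξ)) x := by
    intro x
    simpa [mul_assoc, Pi.neg_def] using ((hasDerivAt_id x).mul_const (ω * ξ)).neg
  have e2 : ∀ x : ℝ, HasDerivAt (fun x : ℝ => x * ω * s) (ω * s) x := by
    intro x
    simpa [mul_assoc] using (hasDerivAt_id x).mul_const (ω * s)
  set g : ℝ → ℝ := fun x =>
    Real.exp (-(x * ω * ξ)) *
      (-(ω * ξ) * Real.sinh (x * ω * s) + (ω * s) * Real.cosh (x * ω * s)) / (ω * s)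
    with hgdef
  have hd1 : ∀ x : ℝ, HasDerivAt h (g x) x := by
    intro x
    rw [hh]
    have := (((e1 x).exp.mul ((e2 x).sinh)).div_const (ω * s))
    refine this.congr_deriv ?_
    simp [hgdef]
    ring
  have hdh : deriv h = g := funext fun x => (hd1 x).deriv
  set g2 : ℝ → ℝ := fun x =>
    Real.exp (-(x * ω * ξ)) *
      ((-(ω * ξ)) * (-(ω * ξ) * Real.sinh (x * ω * s) + (ω * s) * Real.cosh (x * ω * s))
        + (-(ω * ξ) * ((ω * s) * Real.cosh (x * ω * s))
            + (ω * s) * ((ω * s) * Real.sinh (x * ω * s)))) / (ω * s)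
    with hg2def
  have hd2 : ∀ x : ℝ, HasDerivAt g (g2 x) x := by
    intro x
    have inner : HasDerivAt
        (fun x : ℝ => -(ω * ξ) * Real.sinh (x * ω * s) + (ω * s) * Real.cosh (x * ω * s))
        (-(ω * ξ) * ((ω * s) * Real.cosh (x * ω * s))
          + (ω * s) * ((ω * s) * Real.sinh (x * ω * s))) x := by
      have := (((e2 x).sinh).const_mul (-(ω * ξ))).add (((e2 x).cosh).const_mul (ω * s))
      refine this.congr_deriv ?_
      ring
    have := (((e1 x).exp.mul inner).div_const (ω * s))
    refine this.congr_deriv ?_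
    simp [hg2def]
    ring
  have hdg : deriv g = g2 := funext fun x => (hd2 x).deriv
  -- key inequality: for 0 ≤ x ≤ D, ξ * sinh (xωs) < s * cosh (xωs)
  have key : ∀ x : ℝ, 0 ≤ x → x ≤ D → ξ * Real.sinh (x * ω * s) < s * Real.cosh (x * ω * s) := by
    intro x hx0 hxD
    have hc1 : (0:ℝ) < Real.cosh (x * ω * s) := Real.cosh_pos _
    have hc2 : (0:ℝ) < Real.cosh (D * ω * s) := Real.cosh_pos _
    have hmono : 0 ≤ Real.sinh (D * ω * s - x * ω * s) :=
      by simpa using Real.sinh_le_sinh.mpr (mul_le_mul_of_nonneg_right (mul_le_mul_of_nonneg_right hxD hω.le) hspos.le)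
    rw [Real.sinh_sub] at hmono
    have hD2 : ξ * Real.sinh (D * ω * s) < s * Real.cosh (D * ω * s) := by
      rw [Real.tanh_eq_sinh_div_cosh, div_lt_div_iff₀ hc2 hξ0] at hDω
      linarith
    nlinarith [mul_lt_mul_of_pos_right hD2 hc1, mul_nonneg hξ0.le hmono]
  refine ⟨by simp [hdef], ?_, ?_, ?_, ?_, ?_, by nlinarith⟩
  · rw [hdh]
    simp [hgdef]
    exact ⟨hω.ne', hspos.ne'⟩
  · intro x
    rw [hdh, hdg, hdef x]
    simp only [hgdef, hg2def]
    field_simp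
    ring_nf
    linear_combination (ω * Real.exp (-(ω * x * ξ)) * Real.sinh (ω * x * s)) * hs2
  · intro x hx
    rw [hdh]
    have hk := key x hx.1 hx.2
    have hexp : (0:ℝ) < Real.exp (-(x * ω * ξ)) := Real.exp_pos _
    simp only [hgdef]
    apply div_pos _ (by positivity)
    apply mul_pos hexp
    nlinarith
  · intro x hx
    rw [hdh, hdg]
    have hk := key x hx.1.le hx.2
    have hsh : 0 ≤ Real.sinh (x * ω * s) := by simpa using Real.sinh_le_sinh.mpr (mul_nonneg (mul_nonneg hx.1.le hω.le) hspos.le)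
    have hexp : (0:ℝ) < Real.exp (-(x * ω * ξ)) := Real.exp_pos _
    have hc : (0:ℝ) < Real.cosh (x * ω * s) := Real.cosh_pos _
    simp only [hg2def]
    apply div_neg_of_neg_of_pos _ (by positivity)
    apply mul_neg_of_pos_of_neg hexp
    nlinarith [hs2, mul_lt_mul_of_pos_left hk (show (0:ℝ) < 2 * ω ^ 2 * ξ by positivity), mul_nonneg (sq_nonneg ω) hsh]
  · rw [hdh, hdg]
    simp [hg2def]
    field_simp
    ring
end

section
/- Let D, ℓ, β > 0 satisfy D²ℓβ < 8, and set a = 4/(D²β), ω_N = √(aβ)/2 = 1/D, and ξ = (Dℓ/4)·√(β/a) = D²ℓβ/8 ∈ (0,1). Then a ≥ ℓ/2, and the constant c = e^{Dω_Nξ} / (cos(Dω_N√(1−ξ²)) − (ξ/√(1−ξ²))·sin(Dω_N√(1−ξ²))) satisfies c ≤ 2e/(1 − D²ℓβ/8)². -/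
/-- **Bounds on the contraction constants in the underdamped case.**
Let `D, ℓ, β > 0` with `D²ℓβ < 8`, and set `a = 4/(D²β)`, `ω_N = √(aβ)/2`,
`ξ = (Dℓ/4)√(β/a)`.  Then `ω_N = 1/D`, `ξ = D²ℓβ/8 ∈ (0,1)`, `a ≥ ℓ/2`, and
`c = exp (D ω_N ξ) / (cos (D ω_N √(1-ξ²)) - (ξ/√(1-ξ²)) sin (D ω_N √(1-ξ²)))`
satisfies `c ≤ 2e/(1 - D²ℓβ/8)²`. -/
theorem stmt3 (D ℓ β : ℝ) (hD : 0 < D) (hℓ : 0 < ℓ) (hβ : 0 < β)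
    (h8 : D ^ 2 * ℓ * β < 8) :
    let a := 4 / (D ^ 2 * β)
    let ωN := Real.sqrt (a * β) / 2
    let ξ := D * ℓ / 4 * Real.sqrt (β / a)
    let c := Real.exp (D * ωN * ξ) /
      (Real.cos (D * ωN * Real.sqrt (1 - ξ ^ 2)) -
        ξ / Real.sqrt (1 - ξ ^ 2) * Real.sin (D * ωN * Real.sqrt (1 - ξ ^ 2)))
    ωN = 1 / D ∧ ξ = D ^ 2 * ℓ * β / 8 ∧ ξ ∈ Set.Ioo (0 : ℝ) 1 ∧
    ℓ / 2 ≤ a ∧ c ≤ 2 * Real.exp 1 / (1 - D ^ 2 * ℓ * β / 8) ^ 2 := by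
  intro a ωN ξ c
  have hD2β : 0 < D ^ 2 * β := by positivity
  have ha : a = 4 / (D ^ 2 * β) := rfl
  have hab : a * β = (2 / D) ^ 2 := by
    field_simp [ha]
    rw [ha, div_mul_eq_mul_div, div_mul_eq_mul_div, div_eq_iff hD2β.ne']; ring
  have hωN : ωN = 1 / D := by
    show Real.sqrt (a * β) / 2 = 1 / D
    rw [hab, Real.sqrt_sq (by positivity)]
    field_simp
  have hβa : β / a = (D * β / 2) ^ 2 := by
    field_simp [ha]
    rw [ha, mul_div_assoc', div_mul_eq_mul_div, eq_div_iff hD2β.ne']; ring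
  have hξ : ξ = D ^ 2 * ℓ * β / 8 := by
    show D * ℓ / 4 * Real.sqrt (β / a) = _
    rw [hβa, Real.sqrt_sq (by positivity)]
    ring
  have hξ0 : 0 < ξ := by rw [hξ]; positivity
  have hξ1 : ξ < 1 := by rw [hξ]; linarith
  have hDωN : D * ωN = 1 := by rw [hωN]; field_simp
  refine ⟨hωN, hξ, ⟨hξ0, hξ1⟩, ?_, ?_⟩
  · rw [ha, le_div_iff₀ hD2β]
    nlinarith
  · -- main bound
    set s := Real.sqrt (1 - ξ ^ 2) with hs
    have h1ξ2 : 0 < 1 - ξ ^ 2 := by nlinarith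
    have hs0 : 0 < s := Real.sqrt_pos.mpr h1ξ2
    have hssq : s ^ 2 = 1 - ξ ^ 2 := Real.sq_sqrt h1ξ2.le
    have hcos : 1 - s ^ 2 / 2 ≤ Real.cos s := Real.one_sub_sq_div_two_le_cos
    have hsin : Real.sin s ≤ s := Real.sin_le hs0.le
    have hsinpos : 0 < Real.sin s := Real.sin_pos_of_pos_of_lt_pi hs0 (by
      nlinarith [Real.pi_gt_three])
    have hdenom : (1 - ξ) ^ 2 / 2 ≤ Real.cos s - ξ / s * Real.sin s := by
      have h2 : ξ / s * Real.sin s ≤ ξ := by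
        rw [div_mul_eq_mul_div, div_le_iff₀ hs0]
        nlinarith
      nlinarith
    have hdpos : 0 < (1 - ξ) ^ 2 / 2 := by nlinarith
    have hc : c = Real.exp ξ / (Real.cos s - ξ / s * Real.sin s) := by
      show Real.exp (D * ωN * ξ) / _ = _
      rw [hDωN]
      simp only [one_mul, ← hs]
    rw [hc, ← hξ]
    calc Real.exp ξ / (Real.cos s - ξ / s * Real.sin s)
        ≤ Real.exp 1 / ((1 - ξ) ^ 2 / 2) :=
          div_le_div₀ (Real.exp_pos 1).le (Real.exp_le_exp.mpr hξ1.le) hdpos hdenom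
      _ = 2 * Real.exp 1 / (1 - ξ) ^ 2 := by
          rw [div_div_eq_mul_div]
          ring
end

section
/- For every real x > 0, cosh(x·tanh(x)) − sinh(x·tanh(x))/tanh(x) ≥ 8x·e^{−2x} / ((e^{x}+e^{−x})²·(e^{x}−e^{−x})) ≥ 2x·e^{−5x}. -/
/-- For every real `x > 0`,
`cosh (x tanh x) - sinh (x tanh x)/tanh x ≥ 8x e^{-2x}/((e^x+e^{-x})² (e^x - e^{-x})) ≥ 2x e^{-5x}`. -/
theorem stmt6 (x : ℝ) (hx : 0 < x) :
    Real.cosh (x * Real.tanh x) - Real.sinh (x * Real.tanh x) / Real.tanh x ≥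
      8 * x * Real.exp (-(2 * x)) /
        ((Real.exp x + Real.exp (-x)) ^ 2 * (Real.exp x - Real.exp (-x))) ∧
    8 * x * Real.exp (-(2 * x)) /
        ((Real.exp x + Real.exp (-x)) ^ 2 * (Real.exp x - Real.exp (-x))) ≥
      2 * x * Real.exp (-(5 * x)) := by
  set a := Real.exp x with ha
  set b := Real.exp (-x) with hb
  have hab : a * b = 1 := by rw [ha, hb, ← Real.exp_add]; simp
  have hbpos : 0 < b := Real.exp_pos _
  have hapos : 0 < a := Real.exp_pos _
  have hba : b < a := Real.exp_lt_exp.2 (by linarith)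
  have hsinh : Real.sinh x = (a - b) / 2 := Real.sinh_eq x
  have hcosh : Real.cosh x = (a + b) / 2 := Real.cosh_eq x
  have hsx : 0 < Real.sinh x := Real.sinh_pos_iff.2 hx
  have hcx : 0 < Real.cosh x := Real.cosh_pos x
  have htanh : Real.tanh x = Real.sinh x / Real.cosh x := Real.tanh_eq_sinh_div_cosh x
  have htpos : 0 < Real.tanh x := by rw [htanh]; positivity
  have ht1 : Real.tanh x < 1 := by
    rw [htanh, div_lt_one hcx]; exact Real.sinh_lt_cosh x
  have he2 : Real.exp (-(2 * x)) = b ^ 2 := by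
    rw [hb, ← Real.exp_nat_mul]; ring_nf
  have he5 : Real.exp (-(5 * x)) = b ^ 5 := by
    rw [hb, ← Real.exp_nat_mul]; ring_nf
  have hD : 0 < (a + b) ^ 2 * (a - b) := by
    apply mul_pos (by positivity); linarith
  constructor
  · -- first inequality
    have key : Real.cosh (x * Real.tanh x) - Real.sinh (x * Real.tanh x) / Real.tanh x
        = Real.sinh (x - x * Real.tanh x) / Real.sinh x := by
      rw [Real.sinh_sub, htanh]
      field_simp
    rw [key]
    have hupos : 0 < x - x * Real.tanh x := by nlinarith
    have hs : x - x * Real.tanh x ≤ Real.sinh (x - x * Real.tanh x) :=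
      le_of_lt (Real.self_lt_sinh_iff.2 hupos)
    have step : (x - x * Real.tanh x) / Real.sinh x ≥
        8 * x * Real.exp (-(2 * x)) / ((a + b) ^ 2 * (a - b)) := by
      rw [he2, htanh, hsinh, hcosh, ge_iff_le, div_le_div_iff₀ hD (by linarith)]
      have hcne : (a + b) ≠ 0 := by positivity
      field_simp
      nlinarith [mul_pos hx hbpos, mul_pos (mul_pos hx hbpos) hbpos,
        mul_pos (mul_pos hx hbpos) (sub_pos.2 hba), sq_nonneg (a - b), sq_nonneg (a + b),
        mul_pos hbpos (mul_pos (sub_pos.2 hba) (sub_pos.2 hba))]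
    refine le_trans step ?_
    gcongr
  · -- second inequality
    rw [he2, he5, ge_iff_le, le_div_iff₀ hD]
    have h3 : (a + b) ^ 2 * (a - b) ≤ 4 * a ^ 3 := by
      nlinarith [mul_pos (mul_pos hapos hapos) (sub_pos.2 hba), pow_pos hbpos 3,
        mul_pos hapos (mul_pos hbpos hbpos)]
    have hab3 : a ^ 3 * b ^ 3 = 1 := by rw [← mul_pow, hab]; norm_num
    have heq : 2 * x * b ^ 5 * (4 * a ^ 3) = 8 * x * b ^ 2 := by
      linear_combination (8 * x * b ^ 2) * hab3
    have hmul := mul_le_mul_of_nonneg_left h3 (show (0:ℝ) ≤ 2 * x * b ^ 5 by positivity)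
    linarith
end

section
/- Let n ≥ 1, let K ⊆ ℝⁿ be a compact convex set that contains the closed Euclidean ball of radius r > 0 centered at the origin and has diameter at most D, and let g : ℝⁿ → ℝ be ℓ-Lipschitz with ℓ > 0. Let π_g be the probability measure on K with density proportional to e^{−g(x)}, and let π_0 be the uniform probability measure on K. Then 0 ≤ KL(π_g ‖ π_0) ≤ min_{x∈K} g(x) − ∫ g dπ_g + n·log( max{ 2/r , (r+√(r²+D²))·ℓ/(r·log 2) } ) + log(2·Dⁿ). -/
open MeasureTheory
open scoped ENNReal NNReal Pointwise

/-- **KL divergence of a Gibbs measure from the uniform measure.**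
Let `K ⊆ ℝⁿ` be compact convex, containing the closed ball of radius `r > 0` about the
origin, of diameter at most `D`, and let `g` be `ℓ`-Lipschitz (`ℓ > 0`).  Let `π_g` be the
probability measure on `K` with density proportional to `e^{-g}` and `π_0` the uniform
probability measure on `K`.  Then, with `KL(π_g‖π_0) = ∫ log (dπ_g/dπ_0) dπ_g`,
`0 ≤ KL(π_g‖π_0) ≤ min_{x∈K} g(x) - ∫ g dπ_g
  + n log (max (2/r) ((r+√(r²+D²))ℓ/(r log 2))) + log (2Dⁿ)`. -/
theorem stmt8 (n : ℕ) (hn : 1 ≤ n) (K : Set (EuclideanSpace ℝ (Fin n)))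
    (hKcomp : IsCompact K) (hKconv : Convex ℝ K)
    (r D : ℝ) (hr : 0 < r) (hball : Metric.closedBall (0 : EuclideanSpace ℝ (Fin n)) r ⊆ K)
    (hdiam : Metric.diam K ≤ D)
    (ℓ : NNReal) (hℓ : 0 < ℓ) (g : EuclideanSpace ℝ (Fin n) → ℝ)
    (hg : LipschitzWith ℓ g) :
    let πg : Measure (EuclideanSpace ℝ (Fin n)) :=
      (∫⁻ x in K, ENNReal.ofReal (Real.exp (-g x)))⁻¹ •
        ((volume.restrict K).withDensity fun x => ENNReal.ofReal (Real.exp (-g x)))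
    let π0 : Measure (EuclideanSpace ℝ (Fin n)) := (volume K)⁻¹ • volume.restrict K
    let KL : ℝ := ∫ x, Real.log ((πg.rnDeriv π0 x).toReal) ∂πg
    0 ≤ KL ∧
    KL ≤ sInf (g '' K) - (∫ x, g x ∂πg) +
      n * Real.log (max (2 / r) ((r + Real.sqrt (r ^ 2 + D ^ 2)) * ℓ / (r * Real.log 2))) +
      Real.log (2 * D ^ n) := by
  intro πg π0 KL
  have hgc : Continuous g := hg.continuous
  have hgm : Measurable g := hgc.measurable
  set f : EuclideanSpace ℝ (Fin n) → ℝ≥0∞ := fun x => ENNReal.ofReal (Real.exp (-g x)) with hfdef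
  have hfm : Measurable f := ENNReal.measurable_ofReal.comp (Real.continuous_exp.measurable.comp hgm.neg)
  set Z : ℝ≥0∞ := ∫⁻ x in K, f x with hZdef
  set V : ℝ≥0∞ := volume K with hVdef
  have h0K : (0 : EuclideanSpace ℝ (Fin n)) ∈ K := hball (Metric.mem_closedBall_self hr.le)
  have hKne : K.Nonempty := ⟨0, h0K⟩
  have hKmeas : MeasurableSet K := hKcomp.isClosed.measurableSet
  have hVfin : V ≠ ∞ := hKcomp.measure_lt_top.ne
  have hVpos : 0 < V := lt_of_lt_of_le (Metric.measure_closedBall_pos _ _ hr) (measure_mono hball)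
  obtain ⟨x₀, hx₀K, hx₀⟩ := hKcomp.exists_isMinOn hKne hgc.continuousOn
  obtain ⟨x₁, hx₁K, hx₁⟩ := hKcomp.exists_isMaxOn hKne hgc.continuousOn
  have hZle : Z ≤ ENNReal.ofReal (Real.exp (-g x₀)) * V := by
    calc Z ≤ ∫⁻ _x in K, ENNReal.ofReal (Real.exp (-g x₀)) := by
            refine setLIntegral_mono measurable_const fun x hx => ?_
            exact ENNReal.ofReal_le_ofReal (Real.exp_le_exp.2 (neg_le_neg (hx₀ hx)))
      _ = ENNReal.ofReal (Real.exp (-g x₀)) * V := setLIntegral_const _ _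
  have hZge : ENNReal.ofReal (Real.exp (-g x₁)) * V ≤ Z := by
    calc ENNReal.ofReal (Real.exp (-g x₁)) * V = ∫⁻ _x in K, ENNReal.ofReal (Real.exp (-g x₁)) :=
          (setLIntegral_const _ _).symm
      _ ≤ Z := setLIntegral_mono hfm fun x hx =>
          ENNReal.ofReal_le_ofReal (Real.exp_le_exp.2 (neg_le_neg (hx₁ hx)))
  have hZfin : Z ≠ ∞ := (lt_of_le_of_lt hZle (ENNReal.mul_lt_top ENNReal.ofReal_lt_top hVfin.lt_top)).ne
  have hZpos : 0 < Z := lt_of_lt_of_le (ENNReal.mul_pos (by simp [Real.exp_pos]) hVpos.ne') hZge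
  -- measures
  have hπgdef : πg = Z⁻¹ • ((volume.restrict K).withDensity f) := rfl
  have hπ0def : π0 = V⁻¹ • volume.restrict K := rfl
  have hwd_univ : ((volume.restrict K).withDensity f) Set.univ = Z := by
    rw [withDensity_apply f MeasurableSet.univ, Measure.restrict_univ]
  haveI hπ0fin : IsFiniteMeasure π0 := by
    constructor
    rw [hπ0def, Measure.smul_apply, smul_eq_mul, Measure.restrict_apply_univ]
    rw [ENNReal.inv_mul_cancel hVpos.ne' hVfin]
    exact ENNReal.one_lt_top
  haveI hπgprob : IsProbabilityMeasure πg := by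
    constructor
    rw [hπgdef, Measure.smul_apply, smul_eq_mul, hwd_univ]
    exact ENNReal.inv_mul_cancel hZpos.ne' hZfin
  have hπg_eq : πg = π0.withDensity (fun x => (V * Z⁻¹) * f x) := by
    rw [hπ0def, withDensity_smul_measure]
    have : (fun x => (V * Z⁻¹) * f x) = (V * Z⁻¹) • f := rfl
    rw [this, withDensity_smul _ hfm, hπgdef, smul_smul,
      ← mul_assoc, ENNReal.inv_mul_cancel hVpos.ne' hVfin, one_mul]
  have hac : πg ≪ π0 := by
    rw [hπg_eq]; exact withDensity_absolutelyContinuous _ _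
  have hrn : πg.rnDeriv π0 =ᵐ[π0] fun x => (V * Z⁻¹) * f x := by
    rw [hπg_eq]
    exact Measure.rnDeriv_withDensity π0 ((measurable_const.mul hfm))
  -- reals
  have hZ'pos : 0 < Z.toReal := ENNReal.toReal_pos hZpos.ne' hZfin
  have hV'pos : 0 < V.toReal := ENNReal.toReal_pos hVpos.ne' hVfin
  set c' : ℝ := V.toReal / Z.toReal with hc'def
  have hc'pos : 0 < c' := div_pos hV'pos hZ'pos
  have haeK : ∀ᵐ x ∂πg, x ∈ K := by
    rw [hπgdef]
    exact Measure.ae_smul_measure ((withDensity_absolutelyContinuous _ f).ae_le (ae_restrict_mem hKmeas)) _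
  have hint : ∀ h : EuclideanSpace ℝ (Fin n) → ℝ, Continuous h → Integrable h πg := by
    intro h hc
    obtain ⟨C, hC⟩ := hKcomp.exists_bound_of_continuousOn hc.continuousOn
    refine (integrable_const C).mono' hc.aestronglyMeasurable ?_
    filter_upwards [haeK] with x hx using hC x hx
  have hgint := hint g hgc
  have hexpint := hint (fun x => Real.exp (g x)) (Real.continuous_exp.comp hgc)
  have hExp : ∫ x, Real.exp (g x) ∂πg = c' := by
    rw [hπgdef, integral_smul_measure]
    have h1 : ∫ x, Real.exp (g x) ∂((volume.restrict K).withDensity f) = V.toReal := by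
      rw [integral_eq_lintegral_of_nonneg_ae
        (Filter.Eventually.of_forall fun x => (Real.exp_pos (g x)).le)
        ((Real.continuous_exp.comp hgc).aestronglyMeasurable),
        lintegral_withDensity_eq_lintegral_mul _ hfm
        (show Measurable fun x => ENNReal.ofReal (Real.exp (g x)) from
          ENNReal.measurable_ofReal.comp (Real.continuous_exp.measurable.comp hgm))]
      have h2 : (fun x => (f * fun x => ENNReal.ofReal (Real.exp (g x))) x) = fun _ => (1:ℝ≥0∞) := by
        funext x
        show f x * ENNReal.ofReal (Real.exp (g x)) = 1
        rw [hfdef, ← ENNReal.ofReal_mul (Real.exp_pos _).le, ← Real.exp_add, neg_add_cancel,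
          Real.exp_zero, ENNReal.ofReal_one]
      rw [h2, lintegral_one, Measure.restrict_apply_univ]
    rw [h1, smul_eq_mul, ENNReal.toReal_inv, hc'def, div_eq_mul_inv, mul_comm]
  have hKLeq : (∫ x, Real.log ((πg.rnDeriv π0 x).toReal) ∂πg) = Real.log c' - ∫ x, g x ∂πg := by
    have h1 : ∀ᵐ x ∂πg, Real.log ((πg.rnDeriv π0 x).toReal) = Real.log c' - g x := by
      filter_upwards [hac.ae_le hrn] with x hx
      rw [hx, ENNReal.toReal_mul, ENNReal.toReal_mul, ENNReal.toReal_inv, hfdef,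
        ENNReal.toReal_ofReal (Real.exp_pos _).le,
        Real.log_mul (by positivity) (Real.exp_ne_zero _), Real.log_exp, hc'def, div_eq_mul_inv]
      ring
    rw [integral_congr_ae h1, integral_sub (integrable_const _) hgint, integral_const,
      probReal_univ, one_smul]
  have hlow : ∫ x, g x ∂πg ≤ Real.log c' := by
    have hptwise : ∀ x, g x ≤ (Real.log c' - 1) + Real.exp (g x) / c' := by
      intro x
      have h1 := Real.add_one_le_exp (g x - Real.log c')
      rw [Real.exp_sub, Real.exp_log hc'pos] at h1
      linarith
    calc ∫ x, g x ∂πg ≤ ∫ x, ((Real.log c' - 1) + Real.exp (g x) / c') ∂πg :=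
        integral_mono hgint ((integrable_const _).add (hexpint.div_const c')) hptwise
      _ = (Real.log c' - 1) + c' / c' := by
        rw [integral_add (integrable_const _) (hexpint.div_const c'), integral_const,
          probReal_univ, one_smul, integral_div, hExp]
      _ = Real.log c' := by rw [div_self hc'pos.ne']; ring
  -- geometry
  have h2rD : 2 * r ≤ D := by
    set a : EuclideanSpace ℝ (Fin n) := EuclideanSpace.single (⟨0, hn⟩ : Fin n) r with hadef
    have hanorm : ‖a‖ = r := by
      rw [hadef, EuclideanSpace.norm_single, Real.norm_eq_abs, abs_of_pos hr]
    have haK : a ∈ K := hball (by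
      rw [Metric.mem_closedBall, dist_zero_right, hanorm])
    have haK' : -a ∈ K := hball (by
      rw [Metric.mem_closedBall, dist_zero_right, norm_neg, hanorm])
    have hd : dist a (-a) ≤ Metric.diam K := Metric.dist_le_diam_of_mem hKcomp.isBounded haK haK'
    rw [dist_eq_norm, sub_neg_eq_add] at hd
    have h2a : ‖a + a‖ = 2 * r := by
      rw [← two_smul ℝ a, norm_smul, hanorm]
      simp
    linarith
  have hDpos : 0 < D := by linarith
  have hlog2 : (0:ℝ) < Real.log 2 := Real.log_pos one_lt_two
  have hℓR : (0:ℝ) < (ℓ:ℝ) := hℓ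
  set ε : ℝ := min D (Real.log 2 / (ℓ:ℝ)) with hεdef
  have hεpos : 0 < ε := lt_min hDpos (div_pos hlog2 hℓR)
  have hεD : ε ≤ D := min_le_left _ _
  have hℓε : (ℓ:ℝ) * ε ≤ Real.log 2 := by
    have h := min_le_right D (Real.log 2 / (ℓ:ℝ))
    rw [← hεdef, le_div_iff₀ hℓR] at h
    linarith
  set t : ℝ := ε / D with htdef
  have htpos : 0 < t := div_pos hεpos hDpos
  have ht1 : t ≤ 1 := by rw [htdef, div_le_one hDpos]; exact hεD
  set Kt : Set (EuclideanSpace ℝ (Fin n)) := (fun y => x₀ + t • (y - x₀)) '' K with hKtdef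
  have hKtK : Kt ⊆ K := by
    rintro _ ⟨y, hy, rfl⟩
    have h := hKconv hx₀K hy (by linarith : (0:ℝ) ≤ 1 - t) htpos.le (by ring)
    convert h using 1
    module
  have hgKt : ∀ z ∈ Kt, g z ≤ g x₀ + Real.log 2 := by
    rintro _ ⟨y, hy, rfl⟩
    have hyd : ‖y - x₀‖ ≤ D := by
      rw [← dist_eq_norm]
      exact le_trans (Metric.dist_le_diam_of_mem hKcomp.isBounded hy hx₀K) hdiam
    have hd : dist (x₀ + t • (y - x₀)) x₀ ≤ ε := by
      rw [dist_eq_norm, add_sub_cancel_left, norm_smul, Real.norm_eq_abs, abs_of_pos htpos]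
      calc t * ‖y - x₀‖ ≤ t * D := by nlinarith
        _ = ε := by rw [htdef]; field_simp
    have hlip := hg.dist_le_mul (x₀ + t • (y - x₀)) x₀
    rw [Real.dist_eq] at hlip
    have h1 : g (x₀ + t • (y - x₀)) - g x₀ ≤ (ℓ:ℝ) * ε := by
      refine le_trans (le_trans (le_abs_self _) hlip) ?_
      exact mul_le_mul_of_nonneg_left hd hℓR.le
    linarith
  have hvolKt : volume Kt = ENNReal.ofReal (t ^ n) * V := by
    have himg : Kt = (x₀ - t • x₀) +ᵥ (t • K) := by
      rw [hKtdef]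
      ext z
      constructor
      · rintro ⟨y, hy, rfl⟩
        exact ⟨t • y, ⟨y, hy, rfl⟩, by simp only [vadd_eq_add, smul_sub]; abel⟩
      · rintro ⟨_, ⟨y, hy, rfl⟩, rfl⟩
        exact ⟨y, hy, by simp only [vadd_eq_add, smul_sub]; abel⟩
    rw [himg, measure_vadd volume _ _, Measure.addHaar_smul volume t K]
    rw [finrank_euclideanSpace_fin]
    rw [abs_of_pos (pow_pos htpos n), ← hVdef]
  have hZgeKt : ENNReal.ofReal (Real.exp (-(g x₀ + Real.log 2))) * (ENNReal.ofReal (t ^ n) * V) ≤ Z := by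
    calc ENNReal.ofReal (Real.exp (-(g x₀ + Real.log 2))) * (ENNReal.ofReal (t ^ n) * V)
        = ∫⁻ _x in Kt, ENNReal.ofReal (Real.exp (-(g x₀ + Real.log 2))) := by
          rw [setLIntegral_const, hvolKt]
      _ ≤ ∫⁻ x in Kt, f x := setLIntegral_mono hfm fun x hx =>
          ENNReal.ofReal_le_ofReal (Real.exp_le_exp.2 (neg_le_neg (hgKt x hx)))
      _ ≤ Z := lintegral_mono' (Measure.restrict_mono hKtK le_rfl) le_rfl
  have hZreal : Real.exp (-(g x₀ + Real.log 2)) * (t ^ n * V.toReal) ≤ Z.toReal := by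
    have h := ENNReal.toReal_mono hZfin hZgeKt
    rwa [ENNReal.toReal_mul, ENNReal.toReal_mul, ENNReal.toReal_ofReal (Real.exp_pos _).le,
      ENNReal.toReal_ofReal (by positivity)] at h
  have hlogc' : Real.log c' ≤ g x₀ + Real.log 2 - n * Real.log t := by
    have h1 : c' ≤ Real.exp (g x₀ + Real.log 2) / t ^ n := by
      rw [hc'def, div_le_div_iff₀ hZ'pos (by positivity : (0:ℝ) < t ^ n)]
      rw [Real.exp_neg] at hZreal
      have hmul := mul_le_mul_of_nonneg_left hZreal (Real.exp_pos (g x₀ + Real.log 2)).le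
      have hcancel : Real.exp (g x₀ + Real.log 2) * (Real.exp (g x₀ + Real.log 2))⁻¹ = 1 :=
        mul_inv_cancel₀ (Real.exp_ne_zero _)
      have hc2 : t ^ n * V.toReal ≤ Real.exp (g x₀ + Real.log 2) * Z.toReal := by
        calc t ^ n * V.toReal
            = Real.exp (g x₀ + Real.log 2) * ((Real.exp (g x₀ + Real.log 2))⁻¹ * (t ^ n * V.toReal)) := by
              rw [← mul_assoc, hcancel, one_mul]
          _ ≤ Real.exp (g x₀ + Real.log 2) * Z.toReal := hmul
      linarith
    have h2 := Real.log_le_log hc'pos h1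
    rwa [Real.log_div (Real.exp_ne_zero _) (by positivity), Real.log_exp, Real.log_pow] at h2
  set M : ℝ := max (2 / r) ((r + Real.sqrt (r ^ 2 + D ^ 2)) * (ℓ:ℝ) / (r * Real.log 2)) with hMdef
  have hMpos : (0:ℝ) < M := lt_of_lt_of_le (by positivity) (le_max_left _ _)
  have hinvε : 1 / ε ≤ M := by
    rcases min_cases D (Real.log 2 / (ℓ:ℝ)) with ⟨h1, h2⟩ | ⟨h1, h2⟩
    · rw [hεdef, h1]
      refine le_trans ?_ (le_max_left _ _)
      rw [div_le_div_iff₀ hDpos hr]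
      linarith
    · rw [hεdef, h1]
      refine le_trans ?_ (le_max_right _ _)
      rw [one_div_div, div_le_div_iff₀ hlog2 (by positivity)]
      have hs := Real.sqrt_nonneg (r ^ 2 + D ^ 2)
      have hprod : 0 ≤ Real.sqrt (r ^ 2 + D ^ 2) * (ℓ:ℝ) * Real.log 2 :=
        mul_nonneg (mul_nonneg hs hℓR.le) hlog2.le
      nlinarith [hprod]
  have hlogt : -Real.log t ≤ Real.log M + Real.log D := by
    have h1 : 1 / t ≤ M * D := by
      rw [htdef, one_div_div]
      calc D / ε = (1 / ε) * D := by ring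
        _ ≤ M * D := mul_le_mul_of_nonneg_right hinvε hDpos.le
    have h2 := Real.log_le_log (one_div_pos.mpr htpos) h1
    rwa [one_div, Real.log_inv, Real.log_mul hMpos.ne' hDpos.ne'] at h2
  have hsInf : sInf (g '' K) = g x₀ :=
    IsLeast.csInf_eq ⟨Set.mem_image_of_mem g hx₀K, by
      rintro _ ⟨x, hx, rfl⟩; exact hx₀ hx⟩
  have hKLdef : KL = ∫ x, Real.log ((πg.rnDeriv π0 x).toReal) ∂πg := rfl
  have hKL2 : KL = Real.log c' - ∫ x, g x ∂πg := hKLdef.trans hKLeq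
  constructor
  · rw [hKL2]; exact sub_nonneg.mpr hlow
  · rw [hKL2, hsInf]
    have hlog2D : Real.log (2 * D ^ n) = Real.log 2 + (n:ℝ) * Real.log D := by
      rw [Real.log_mul two_ne_zero (by positivity), Real.log_pow]
    rw [hlog2D]
    have hnlog : (n:ℝ) * (-Real.log t) ≤ (n:ℝ) * (Real.log M + Real.log D) :=
      mul_le_mul_of_nonneg_left hlogt (Nat.cast_nonneg n)
    linarith only [hlogc', hnlog]
end

section
/- Let n ≥ 1 and let K ⊆ ℝⁿ be a compact convex set that contains the closed Euclidean ball of radius r > 0 centered at the origin and has diameter at most D. Then for every x* ∈ K and every ε > 0, the set K ∩ B̄(x*, ε) contains a closed Euclidean ball of radius min{ r/2 , r·ε/(r + √(r² + D²)) }, where B̄(x*, ε) is the closed ball of radius ε centered at x*. -/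
/-- **Inscribed ball in the intersection of `K` with a ball.**
Let `K ⊆ ℝⁿ` be compact convex, containing the closed ball of radius `r > 0` about the
origin and of diameter at most `D`.  Then for every `x* ∈ K` and `ε > 0`, the set
`K ∩ B̄(x*, ε)` contains a closed ball of radius `min (r/2) (rε/(r + √(r² + D²)))`. -/
theorem stmt9 (n : ℕ) (hn : 1 ≤ n) (K : Set (EuclideanSpace ℝ (Fin n)))
    (hKcomp : IsCompact K) (hKconv : Convex ℝ K)
    (r D : ℝ) (hr : 0 < r) (hball : Metric.closedBall (0 : EuclideanSpace ℝ (Fin n)) r ⊆ K)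
    (hdiam : Metric.diam K ≤ D)
    (xstar : EuclideanSpace ℝ (Fin n)) (hx : xstar ∈ K) (ε : ℝ) (hε : 0 < ε) :
    ∃ c : EuclideanSpace ℝ (Fin n),
      Metric.closedBall c (min (r / 2) (r * ε / (r + Real.sqrt (r ^ 2 + D ^ 2)))) ⊆
        K ∩ Metric.closedBall xstar ε := by
  set s : ℝ := r + Real.sqrt (r ^ 2 + D ^ 2) with hs_def
  have hs : 0 < s := by positivity
  set ρ : ℝ := min (r / 2) (r * ε / s) with hρ_def
  have hρpos : 0 < ρ := lt_min (by positivity) (by positivity)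
  set t : ℝ := ρ / r with ht_def
  have htpos : 0 < t := div_pos hρpos hr
  have htr : t * r = ρ := div_mul_cancel₀ ρ (ne_of_gt hr)
  have ht1 : t ≤ 1 / 2 := by
    rw [ht_def]
    rw [div_le_iff₀ hr]
    calc ρ ≤ r / 2 := min_le_left _ _
    _ = 1 / 2 * r := by ring
  -- ‖xstar‖ ≤ D
  have hDx : ‖xstar‖ ≤ D := by
    have h0 : (0 : EuclideanSpace ℝ (Fin n)) ∈ K := hball (by simp [le_of_lt hr])
    have := Metric.dist_le_diam_of_mem hKcomp.isBounded hx h0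
    simpa [dist_eq_norm] using this.trans hdiam
  have hDle : D ≤ Real.sqrt (r ^ 2 + D ^ 2) := by
    have : D ≤ Real.sqrt (D ^ 2) := by
      rw [Real.sqrt_sq_eq_abs]; exact le_abs_self D
    refine this.trans (Real.sqrt_le_sqrt (by nlinarith))
  have hts : t * s ≤ ε := by
    have hρ2 : ρ ≤ r * ε / s := min_le_right _ _
    have : t ≤ ε / s := by
      rw [ht_def, div_le_div_iff₀ hr hs] at *
      calc ρ * s ≤ (r * ε / s) * s := by nlinarith
      _ = ε * r := by field_simp
    calc t * s ≤ (ε / s) * s := by nlinarith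
    _ = ε := by field_simp
  refine ⟨(1 - t) • xstar, fun y hy => ?_⟩
  rw [Metric.mem_closedBall, dist_eq_norm] at hy
  constructor
  · -- y ∈ K
    have hz : t⁻¹ • (y - (1 - t) • xstar) ∈ Metric.closedBall (0 : EuclideanSpace ℝ (Fin n)) r := by
      rw [Metric.mem_closedBall, dist_zero_right, norm_smul, norm_inv,
        Real.norm_eq_abs, abs_of_pos htpos]
      rw [inv_mul_le_iff₀ htpos]
      calc ‖y - (1 - t) • xstar‖ ≤ ρ := hy
      _ = t * r := htr.symm
    have := hKconv hx (hball hz) (by linarith : (0:ℝ) ≤ 1 - t) (le_of_lt htpos) (by ring)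
    have heq : (1 - t) • xstar + t • (t⁻¹ • (y - (1 - t) • xstar)) = y := by
      rw [smul_smul, mul_inv_cancel₀ (ne_of_gt htpos), one_smul]
      abel
    rwa [heq] at this
  · -- y ∈ closedBall xstar ε
    rw [Metric.mem_closedBall, dist_eq_norm]
    have h1 : ‖(1 - t) • xstar - xstar‖ = t * ‖xstar‖ := by
      have : (1 - t) • xstar - xstar = (-t) • xstar := by
        nth_rewrite 2 [← one_smul ℝ xstar]
        rw [← sub_smul]; congr 1; ring
      rw [this, norm_smul, Real.norm_eq_abs, abs_neg, abs_of_pos htpos]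
    calc ‖y - xstar‖ ≤ ‖y - (1 - t) • xstar‖ + ‖(1 - t) • xstar - xstar‖ := by
          simpa using norm_sub_le_norm_sub_add_norm_sub y ((1 - t) • xstar) xstar
    _ ≤ ρ + t * ‖xstar‖ := by rw [h1]; linarith
    _ = t * (r + ‖xstar‖) := by rw [← htr]; ring
    _ ≤ t * s := by
        have : r + ‖xstar‖ ≤ s := by rw [hs_def]; linarith [hDx.trans hDle]
        nlinarith
    _ ≤ ε := hts
end

section
/- Let n ≥ 1, let K ⊆ ℝⁿ be a compact convex set that contains the closed Euclidean ball of radius r > 0 centered at the origin and has diameter at most D, let f̄ : ℝⁿ → ℝ be u-Lipschitz with u > 0, and let β > 0. Let π_{βf̄} be the probability measure on K with density proportional to e^{−β·f̄(x)}. Then ∫ f̄ dπ_{βf̄} ≤ min_{x∈K} f̄(x) + (n/β)·log( 2D· max{ 2/r , (r+√(r²+D²))·u·β/(r·log 2) } ). -/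
open MeasureTheory

lemma gibbs_aux {α : Type*} [MeasurableSpace α] (μ : Measure α) [IsFiniteMeasure μ]
    (g : α → ℝ)
    (hgei : Integrable (fun x => g x * Real.exp (-(g x))) μ)
    (hei : Integrable (fun x => Real.exp (-(g x))) μ)
    (hW : 0 < ∫ x, Real.exp (-(g x)) ∂μ) (hV : 0 < (μ Set.univ).toReal) :
    ∫ x, g x * Real.exp (-(g x)) ∂μ ≤ (∫ x, Real.exp (-(g x)) ∂μ) *
      Real.log ((μ Set.univ).toReal / ∫ x, Real.exp (-(g x)) ∂μ) := by
  set W := ∫ x, Real.exp (-(g x)) ∂μ with hWdef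
  set V := (μ Set.univ).toReal with hVdef
  have key : ∀ x, g x * Real.exp (-(g x)) ≤
      Real.exp (-(g x)) * Real.log (V / W) + (W / V - Real.exp (-(g x))) := by
    intro x
    have hy : 0 < Real.exp (g x) * (W / V) := by positivity
    have hlog := Real.log_le_sub_one_of_pos hy
    rw [Real.log_mul (Real.exp_pos _).ne' (by positivity), Real.log_exp,
      Real.log_div hW.ne' hV.ne'] at hlog
    have hexp : 0 < Real.exp (-(g x)) := Real.exp_pos _
    have := mul_le_mul_of_nonneg_left hlog hexp.le
    have hid : Real.exp (-(g x)) * (Real.exp (g x) * (W / V) - 1)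
        = W / V - Real.exp (-(g x)) := by
      rw [mul_sub, mul_one, ← mul_assoc, ← Real.exp_add]
      simp [Real.exp_zero]
    have hid2 : Real.exp (-(g x)) * (g x + (Real.log W - Real.log V))
        = g x * Real.exp (-(g x)) - Real.exp (-(g x)) * Real.log (V / W) := by
      rw [Real.log_div hV.ne' hW.ne']; ring
    rw [hid, hid2] at this
    linarith
  have hint : ∫ x, (Real.exp (-(g x)) * Real.log (V / W) + (W / V - Real.exp (-(g x)))) ∂μ
      = W * Real.log (V / W) := by
    have i1 : Integrable (fun x => Real.exp (-(g x)) * Real.log (V / W)) μ := hei.mul_const _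
    have i2 : Integrable (fun x => W / V - Real.exp (-(g x))) μ :=
      (integrable_const _).sub hei
    rw [integral_add i1 i2, integral_mul_const, integral_sub (integrable_const _) hei,
      integral_const]
    simp only [smul_eq_mul]
    field_simp
    rw [← hWdef, measureReal_def, ← hVdef]; ring
  calc ∫ x, g x * Real.exp (-(g x)) ∂μ
      ≤ ∫ x, (Real.exp (-(g x)) * Real.log (V / W) + (W / V - Real.exp (-(g x)))) ∂μ :=
        integral_mono hgei ((hei.mul_const _).add ((integrable_const _).sub hei)) key
    _ = W * Real.log (V / W) := hint



set_option maxHeartbeats 2000000 in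
/-- **Near-optimality of the constrained Gibbs distribution.**
Let `K ⊆ ℝⁿ` be compact convex, containing the closed ball of radius `r > 0` about the
origin and of diameter at most `D`, let `f̄` be `u`-Lipschitz (`u > 0`), and let `β > 0`.
Let `π_{βf̄}` be the probability measure on `K` with density proportional to `e^{-β f̄}`.
Then `∫ f̄ dπ_{βf̄} ≤ min_{x∈K} f̄(x)
  + (n/β) log (2D max (2/r) ((r+√(r²+D²)) u β/(r log 2)))`. -/
theorem stmt10 (n : ℕ) (hn : 1 ≤ n) (K : Set (EuclideanSpace ℝ (Fin n)))
    (hKcomp : IsCompact K) (hKconv : Convex ℝ K)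
    (r D : ℝ) (hr : 0 < r) (hball : Metric.closedBall (0 : EuclideanSpace ℝ (Fin n)) r ⊆ K)
    (hdiam : Metric.diam K ≤ D)
    (u : NNReal) (hu : 0 < u) (f : EuclideanSpace ℝ (Fin n) → ℝ)
    (hf : LipschitzWith u f) (β : ℝ) (hβ : 0 < β) :
    let πβf : Measure (EuclideanSpace ℝ (Fin n)) :=
      (∫⁻ x in K, ENNReal.ofReal (Real.exp (-(β * f x))))⁻¹ •
        ((volume.restrict K).withDensity fun x => ENNReal.ofReal (Real.exp (-(β * f x))))
    (∫ x, f x ∂πβf) ≤ sInf (f '' K) +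
      n / β * Real.log (2 * D *
        max (2 / r) ((r + Real.sqrt (r ^ 2 + D ^ 2)) * u * β / (r * Real.log 2))) := by
  intro πβf
  have h0K : (0 : EuclideanSpace ℝ (Fin n)) ∈ K := hball (Metric.mem_closedBall_self hr.le)
  have hKne : K.Nonempty := ⟨0, h0K⟩
  have hKmeas : MeasurableSet K := hKcomp.isClosed.measurableSet
  obtain ⟨x₀, hx₀K, hx₀min⟩ := hKcomp.exists_isMinOn hKne hf.continuous.continuousOn
  have hmin : ∀ y ∈ K, f x₀ ≤ f y := hx₀min
  set m := f x₀ with hm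
  have hsInf : sInf (f '' K) = m := by
    apply IsLeast.csInf_eq
    exact ⟨⟨x₀, hx₀K, rfl⟩, by rintro _ ⟨y, hyK, rfl⟩; exact hmin y hyK⟩
  -- integrability setup
  have hfc : Continuous f := hf.continuous
  set g : EuclideanSpace ℝ (Fin n) → ℝ := fun x => β * (f x - m) with hgdef
  have hgc : Continuous g := by unfold g; fun_prop
  have hie : IntegrableOn (fun x => Real.exp (-(g x))) K volume := by
    exact ContinuousOn.integrableOn_compact hKcomp (Continuous.continuousOn (by fun_prop))
  have hige : IntegrableOn (fun x => g x * Real.exp (-(g x))) K volume := by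
    exact ContinuousOn.integrableOn_compact hKcomp (Continuous.continuousOn (by fun_prop))
  have hiE : IntegrableOn (fun x => Real.exp (-(β * f x))) K volume := by
    exact ContinuousOn.integrableOn_compact hKcomp (Continuous.continuousOn (by fun_prop))
  have hiEf : IntegrableOn (fun x => Real.exp (-(β * f x)) * f x) K volume := by
    exact ContinuousOn.integrableOn_compact hKcomp (Continuous.continuousOn (by fun_prop))
  set W := ∫ x in K, Real.exp (-(g x)) with hWdef
  set Z := ∫ x in K, Real.exp (-(β * f x)) with hZdef
  set V := (volume K).toReal with hVdef
  set G := ∫ x in K, g x * Real.exp (-(g x)) with hGdef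
  -- volume facts
  have hVfin : volume K ≠ ⊤ := hKcomp.measure_lt_top.ne
  have hVpos : 0 < volume K :=
    lt_of_lt_of_le (Metric.measure_closedBall_pos volume _ hr) (measure_mono hball)
  have hV : 0 < V := ENNReal.toReal_pos hVpos.ne' hVfin
  -- geometry
  set S := Real.sqrt (r ^ 2 + D ^ 2) with hSdef
  have hSnn : 0 ≤ S := Real.sqrt_nonneg _
  have hDr : r ≤ D := by
    have h1 : (EuclideanSpace.single (⟨0, hn⟩ : Fin n) r) ∈ K := by
      apply hball
      rw [Metric.mem_closedBall, dist_zero_right, EuclideanSpace.norm_single,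
        Real.norm_eq_abs, abs_of_pos hr]
    calc r = dist (EuclideanSpace.single (⟨0, hn⟩ : Fin n) r) (0 : EuclideanSpace ℝ (Fin n)) := by
            rw [dist_zero_right, EuclideanSpace.norm_single, Real.norm_eq_abs, abs_of_pos hr]
      _ ≤ Metric.diam K := Metric.dist_le_diam_of_mem hKcomp.isBounded h1 h0K
      _ ≤ D := hdiam
  have hD : 0 < D := lt_of_lt_of_le hr hDr
  have hDS : D ≤ S := by
    rw [hSdef]
    conv_lhs => rw [← Real.sqrt_sq hD.le]
    exact Real.sqrt_le_sqrt (by nlinarith)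
  have hx₀S : ‖x₀‖ ≤ S := by
    have h1 := Metric.dist_le_diam_of_mem hKcomp.isBounded hx₀K h0K
    rw [dist_zero_right] at h1
    linarith
  have hrS : 0 < r + S := by linarith
  have hL2 : 0 < Real.log 2 := Real.log_pos one_lt_two
  have huR : (0:ℝ) < (u : ℝ) := hu
  set c0 := β * (u : ℝ) * (r + S) with hc0def
  have hc0 : 0 < c0 := by positivity
  set t := min 1 (Real.log 2 / c0) with htdef
  have ht0 : 0 < t := lt_min one_pos (div_pos hL2 hc0)
  have ht1 : t ≤ 1 := min_le_left _ _
  have htc0 : t * c0 ≤ Real.log 2 := by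
    calc t * c0 ≤ (Real.log 2 / c0) * c0 :=
          mul_le_mul_of_nonneg_right (min_le_right _ _) hc0.le
      _ = Real.log 2 := div_mul_cancel₀ _ hc0.ne'
  set B := Metric.closedBall ((1 - t) • x₀) (t * r) with hBdef
  have hBK : B ⊆ K := by
    intro y hy
    have hyd : ‖y - (1 - t) • x₀‖ ≤ t * r := by
      rw [← dist_eq_norm]; exact Metric.mem_closedBall.mp hy
    have hz : t⁻¹ • (y - (1 - t) • x₀) ∈ Metric.closedBall (0 : EuclideanSpace ℝ (Fin n)) r := by
      rw [Metric.mem_closedBall, dist_zero_right, norm_smul, Real.norm_eq_abs,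
        abs_of_pos (inv_pos.mpr ht0)]
      calc t⁻¹ * ‖y - (1 - t) • x₀‖ ≤ t⁻¹ * (t * r) :=
            mul_le_mul_of_nonneg_left hyd (inv_pos.mpr ht0).le
        _ = r := by field_simp
    have hrepr : y = (1 - t) • x₀ + t • (t⁻¹ • (y - (1 - t) • x₀)) := by
      rw [smul_smul, mul_inv_cancel₀ ht0.ne', one_smul]
      abel
    rw [hrepr]
    exact hKconv hx₀K (hball hz) (by linarith) ht0.le (by ring)
  have hgB : ∀ y ∈ B, g y ≤ Real.log 2 := by
    intro y hy
    have hdy : dist y x₀ ≤ t * (r + S) := by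
      have h1 : dist y ((1 - t) • x₀) ≤ t * r := Metric.mem_closedBall.mp hy
      have h2 : dist ((1 - t) • x₀) x₀ = t * ‖x₀‖ := by
        rw [dist_eq_norm]
        have h3 : (1 - t) • x₀ - x₀ = (-t) • x₀ := by
          rw [sub_smul, one_smul, neg_smul]; abel
        rw [h3, norm_smul, Real.norm_eq_abs, abs_neg, abs_of_pos ht0]
      have h4 : t * ‖x₀‖ ≤ t * S := mul_le_mul_of_nonneg_left hx₀S ht0.le
      calc dist y x₀ ≤ dist y ((1 - t) • x₀) + dist ((1 - t) • x₀) x₀ := dist_triangle _ _ _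
        _ ≤ t * r + t * S := by rw [h2]; linarith
        _ = t * (r + S) := by ring
    have hfy : f y - m ≤ (u : ℝ) * dist y x₀ := by
      have h5 := hf.dist_le_mul y x₀
      rw [Real.dist_eq] at h5
      have h6 := le_abs_self (f y - f x₀)
      linarith [hm.le, hm.ge]
    have h7 : (u : ℝ) * dist y x₀ ≤ (u : ℝ) * (t * (r + S)) :=
      mul_le_mul_of_nonneg_left hdy huR.le
    calc g y = β * (f y - m) := rfl
      _ ≤ β * ((u : ℝ) * (t * (r + S))) := by nlinarith
      _ = t * c0 := by rw [hc0def]; ring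
      _ ≤ Real.log 2 := htc0
  -- lower bound for W
  have hBmeas : MeasurableSet B := measurableSet_closedBall
  have hWlb : (volume B).toReal * 2⁻¹ ≤ W := by
    have h1 : ∫ _x in B, (2⁻¹ : ℝ) ≤ ∫ x in B, Real.exp (-(g x)) := by
      apply setIntegral_mono_on
        (integrableOn_const measure_closedBall_lt_top.ne)
        (hie.mono_set hBK) hBmeas
      intro x hx
      have h2 : -(Real.log 2) ≤ -(g x) := neg_le_neg (hgB x hx)
      calc (2⁻¹ : ℝ) = Real.exp (-(Real.log 2)) := by
            rw [Real.exp_neg, Real.exp_log two_pos]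
        _ ≤ Real.exp (-(g x)) := Real.exp_le_exp.mpr h2
    have h2 : ∫ x in B, Real.exp (-(g x)) ≤ W :=
      setIntegral_mono_set hie
        (Filter.Eventually.of_forall fun x => (Real.exp_pos _).le)
        (HasSubset.Subset.eventuallyLE hBK)
    rw [setIntegral_const, smul_eq_mul] at h1
    rw [measureReal_def] at h1
    linarith
  set ι := (volume (Metric.ball (0 : EuclideanSpace ℝ (Fin n)) 1)).toReal with hιdef
  have hιpos : 0 < ι :=
    ENNReal.toReal_pos (Metric.measure_ball_pos volume _ one_pos).ne'
      measure_ball_lt_top.ne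
  have hvolB : (volume B).toReal = (t * r) ^ n * ι := by
    rw [hBdef, Measure.addHaar_closedBall volume _ (by positivity : (0:ℝ) ≤ t * r),
      finrank_euclideanSpace_fin, ENNReal.toReal_mul,
      ENNReal.toReal_ofReal (by positivity)]
  have hVub : V ≤ D ^ n * ι := by
    have h1 : volume K ≤ volume (Metric.closedBall (0 : EuclideanSpace ℝ (Fin n)) D) := by
      apply measure_mono
      intro x hx
      rw [Metric.mem_closedBall, dist_zero_right]
      have h2 := Metric.dist_le_diam_of_mem hKcomp.isBounded hx h0K
      rw [dist_zero_right] at h2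
      linarith
    have h2 : (volume (Metric.closedBall (0 : EuclideanSpace ℝ (Fin n)) D)).toReal
        = D ^ n * ι := by
      rw [Measure.addHaar_closedBall volume _ hD.le, finrank_euclideanSpace_fin,
        ENNReal.toReal_mul, ENNReal.toReal_ofReal (by positivity)]
    rw [hVdef, ← h2]
    exact ENNReal.toReal_mono measure_closedBall_lt_top.ne h1
  have hW : 0 < W := by
    rw [hvolB] at hWlb
    have : (0:ℝ) < (t * r) ^ n * ι * 2⁻¹ := by positivity
    linarith
  have hZW : Z = Real.exp (-(β * m)) * W := by
    have hpt : ∀ x, Real.exp (-(β * f x)) = Real.exp (-(β * m)) * Real.exp (-(g x)) := by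
      intro x; rw [← Real.exp_add]; congr 1
      show -(β * f x) = -(β * m) + -(β * (f x - m)); ring
    rw [hZdef, setIntegral_congr_fun hKmeas (fun x _ => hpt x), MeasureTheory.integral_const_mul]
  have hZ : 0 < Z := hZW ▸ mul_pos (Real.exp_pos _) hW
  -- reduce the Gibbs integral
  have hZl : (∫⁻ x in K, ENNReal.ofReal (Real.exp (-(β * f x)))) = ENNReal.ofReal Z := by
    rw [hZdef, MeasureTheory.ofReal_integral_eq_lintegral_ofReal hiE
      (Filter.Eventually.of_forall fun x => (Real.exp_pos _).le)]
  have hπ : ∫ x, f x ∂πβf = Z⁻¹ * ∫ x in K, Real.exp (-(β * f x)) * f x := by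
    show ∫ x, f x ∂((∫⁻ x in K, ENNReal.ofReal (Real.exp (-(β * f x))))⁻¹ •
        ((volume.restrict K).withDensity fun x => ENNReal.ofReal (Real.exp (-(β * f x))))) = _
    rw [integral_smul_measure, hZl]
    have hd : (fun x => ENNReal.ofReal (Real.exp (-(β * f x))))
        = fun x => ((Real.exp (-(β * f x))).toNNReal : ENNReal) := rfl
    rw [hd, integral_withDensity_eq_integral_smul₀]
    · rw [ENNReal.toReal_inv, ENNReal.toReal_ofReal hZ.le]
      simp only [smul_eq_mul]
      congr 1
      apply setIntegral_congr_fun hKmeas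
      intro x _
      simp [NNReal.smul_def, Real.coe_toNNReal _ (Real.exp_pos _).le]
    · exact (continuous_real_toNNReal.comp (by fun_prop)).aemeasurable
  -- ratio bound
  have hrat : V / W ≤ 2 * (D / (t * r)) ^ n := by
    have hW0 : (0:ℝ) < (t * r) ^ n * ι * 2⁻¹ := by positivity
    have hWge : (t * r) ^ n * ι * 2⁻¹ ≤ W := by rw [hvolB] at hWlb; linarith
    calc V / W ≤ (D ^ n * ι) / ((t * r) ^ n * ι * 2⁻¹) :=
          div_le_div₀ (by positivity) hVub hW0 hWge
      _ = 2 * (D / (t * r)) ^ n := by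
          rw [div_pow]
          field_simp
  have hlogVW : Real.log (V / W) ≤ (n : ℝ) * Real.log (2 * D / (t * r)) := by
    have h1 : V / W ≤ (2 * D / (t * r)) ^ n := by
      calc V / W ≤ 2 * (D / (t * r)) ^ n := hrat
        _ ≤ 2 ^ n * (D / (t * r)) ^ n := by
            apply mul_le_mul_of_nonneg_right _ (by positivity)
            exact le_self_pow₀ one_le_two (by omega)
        _ = (2 * D / (t * r)) ^ n := by rw [← mul_pow, mul_div_assoc]
    calc Real.log (V / W) ≤ Real.log ((2 * D / (t * r)) ^ n) :=
          Real.log_le_log (by positivity) h1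
      _ = (n : ℝ) * Real.log (2 * D / (t * r)) := by rw [Real.log_pow]
  set M := max (2 / r) ((r + S) * (u : ℝ) * β / (r * Real.log 2)) with hMdef
  have htrM : (t * r)⁻¹ ≤ M := by
    rcases min_cases 1 (Real.log 2 / c0) with ⟨he, _⟩ | ⟨he, _⟩
    · have ht : t = 1 := htdef.trans he
      rw [ht, one_mul]
      have h1 : r⁻¹ ≤ 2 / r := by
        rw [div_eq_mul_inv]
        have := inv_pos.mpr hr
        linarith
      exact le_trans h1 (le_max_left _ _)
    · have ht : t = Real.log 2 / c0 := htdef.trans he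
      have heq : (t * r)⁻¹ = c0 / (r * Real.log 2) := by
        rw [ht, div_mul_eq_mul_div, inv_div, mul_comm (Real.log 2) r]
      have heq2 : c0 / (r * Real.log 2) = (r + S) * (u : ℝ) * β / (r * Real.log 2) := by
        rw [hc0def]; ring
      rw [heq, heq2]
      exact le_max_right _ _
  have hlogM : Real.log (2 * D / (t * r)) ≤ Real.log (2 * D * M) := by
    apply Real.log_le_log (by positivity)
    rw [div_eq_mul_inv]
    exact mul_le_mul_of_nonneg_left htrM (by positivity)
  -- Gibbs inequality
  haveI : IsFiniteMeasure (volume.restrict K) :=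
    ⟨by rw [Measure.restrict_apply_univ]; exact hKcomp.measure_lt_top⟩
  have hGibbs : G ≤ W * Real.log (V / W) := by
    have h := gibbs_aux (volume.restrict K) g hige hie hW
      (by rw [Measure.restrict_apply_univ]; exact hV)
    rwa [Measure.restrict_apply_univ] at h
  -- combine
  have hfinal : ∫ x, f x ∂πβf ≤ m + β⁻¹ * Real.log (V / W) := by
    rw [hπ]
    have hpt2 : ∀ x ∈ K, Real.exp (-(β * f x)) * f x
        = Real.exp (-(β * m)) * (m * Real.exp (-(g x)) + β⁻¹ * (g x * Real.exp (-(g x)))) := by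
      intro x _
      have hE : Real.exp (-(β * f x)) = Real.exp (-(β * m)) * Real.exp (-(g x)) := by
        rw [← Real.exp_add]; congr 1
        show -(β * f x) = -(β * m) + -(β * (f x - m)); ring
      have hgx : g x = β * (f x - m) := rfl
      have hfx : f x = m + β⁻¹ * g x := by
        rw [hgx, inv_mul_cancel_left₀ hβ.ne']
        ring
      rw [hE]
      nth_rewrite 1 [hfx]
      ring
    have hNum : ∫ x in K, Real.exp (-(β * f x)) * f x
        = Real.exp (-(β * m)) * (m * W + β⁻¹ * G) := by
      rw [setIntegral_congr_fun hKmeas hpt2, MeasureTheory.integral_const_mul]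
      congr 1
      rw [integral_add (hie.const_mul m) (hige.const_mul β⁻¹),
        MeasureTheory.integral_const_mul, MeasureTheory.integral_const_mul]
    rw [hNum, hZW]
    have hkey : (Real.exp (-(β * m)) * W)⁻¹ * (Real.exp (-(β * m)) * (m * W + β⁻¹ * G))
        = m + β⁻¹ * (G / W) := by
      field_simp
    rw [hkey]
    have hGW : G / W ≤ Real.log (V / W) := (div_le_iff₀ hW).mpr (by linarith)
    have := mul_le_mul_of_nonneg_left hGW (inv_pos.mpr hβ).le
    linarith
  have hn' : (0:ℝ) ≤ (n:ℝ) := Nat.cast_nonneg n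
  calc ∫ x, f x ∂πβf ≤ m + β⁻¹ * Real.log (V / W) := hfinal
    _ ≤ m + β⁻¹ * ((n : ℝ) * Real.log (2 * D * M)) := by
        have h1 : Real.log (V / W) ≤ (n : ℝ) * Real.log (2 * D * M) :=
          le_trans hlogVW (mul_le_mul_of_nonneg_left hlogM hn')
        have := mul_le_mul_of_nonneg_left h1 (inv_pos.mpr hβ).le
        linarith
    _ = sInf (f '' K) + (n : ℝ) / β * Real.log (2 * D * M) := by
        rw [hsInf]; ring
end

section
/- Let n ≥ 1, let K' ⊆ K be nonempty closed convex subsets of ℝⁿ, and let δ > 0 be such that every point of K lies within Euclidean distance δ of K'. Let x ∈ ℝⁿ and R > 0 satisfy ‖x − Π_K(x)‖ ≤ R. Then ‖Π_K(x) − Π_{K'}(x)‖ ≤ δ + √(δ² + 2δR). -/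
open scoped RealInnerProductSpace


/-- **Projections onto nearby convex sets are close.**
Let `K' ⊆ K` be nonempty closed convex subsets of `ℝⁿ` such that every point of `K` lies
within distance `δ > 0` of `K'`.  If `p` is the nearest point to `x` in `K` and `p'` is the
nearest point to `x` in `K'`, and `‖x - p‖ ≤ R` with `R > 0`, then
`‖p - p'‖ ≤ δ + √(δ² + 2δR)`. -/
theorem stmt11 (n : ℕ) (hn : 1 ≤ n) (K K' : Set (EuclideanSpace ℝ (Fin n)))
    (hsub : K' ⊆ K) (hKcl : IsClosed K) (hKconv : Convex ℝ K)
    (hK'cl : IsClosed K') (hK'conv : Convex ℝ K')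
    (hKne : K.Nonempty) (hK'ne : K'.Nonempty)
    (δ : ℝ) (hδ : 0 < δ) (hdist : ∀ y ∈ K, ∃ z ∈ K', ‖y - z‖ ≤ δ)
    (x p p' : EuclideanSpace ℝ (Fin n)) (R : ℝ) (hR : 0 < R)
    (hp : p ∈ K) (hpmin : ∀ z ∈ K, ‖x - p‖ ≤ ‖x - z‖)
    (hp' : p' ∈ K') (hp'min : ∀ z ∈ K', ‖x - p'‖ ≤ ‖x - z‖)
    (hxR : ‖x - p‖ ≤ R) :
    ‖p - p'‖ ≤ δ + Real.sqrt (δ ^ 2 + 2 * δ * R) := by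
  -- variational inequality for p
  haveI : Nonempty K := ⟨⟨p, hp⟩⟩
  have hinf : ‖x - p‖ = ⨅ w : K, ‖x - w‖ := by
    refine le_antisymm (le_ciInf fun w => hpmin w w.2) ?_
    exact ciInf_le ⟨0, fun _ ⟨w, h⟩ => h ▸ norm_nonneg _⟩ (⟨p, hp⟩ : K)
  have hvar : ∀ w ∈ K, ⟪x - p, w - p⟫ ≤ 0 :=
    (norm_eq_iInf_iff_real_inner_le_zero hKconv hp).mp hinf
  -- q ∈ K' near p
  obtain ⟨q, hqK', hq⟩ := hdist p hp
  have h1 : ‖x - p'‖ ≤ ‖x - p‖ + δ :=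
    (hp'min q hqK').trans <| by
      calc ‖x - q‖ = ‖(x - p) + (p - q)‖ := by abel_nf
        _ ≤ ‖x - p‖ + ‖p - q‖ := norm_add_le _ _
        _ ≤ ‖x - p‖ + δ := by linarith
  have hkey : ‖p - p'‖ ^ 2 ≤ δ ^ 2 + 2 * δ * R := by
    have hexp : ‖x - p'‖ ^ 2 = ‖x - p‖ ^ 2 + 2 * ⟪x - p, p - p'⟫ + ‖p - p'‖ ^ 2 := by
      have : x - p' = (x - p) + (p - p') := by abel
      rw [this, @norm_add_sq_real]
    have hip : 0 ≤ ⟪x - p, p - p'⟫ := by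
      have := hvar p' (hsub hp')
      have : ⟪x - p, p - p'⟫ = -⟪x - p, p' - p⟫ := by
        rw [← inner_neg_right]; congr 1; abel
      linarith [hvar p' (hsub hp')]
    have hsq : ‖x - p'‖ ^ 2 ≤ (‖x - p‖ + δ) ^ 2 := by
      have h0 : (0:ℝ) ≤ ‖x - p'‖ := norm_nonneg _
      exact pow_le_pow_left₀ h0 h1 2
    nlinarith [norm_nonneg (x - p), hδ.le]
  have hnn : (0:ℝ) ≤ δ ^ 2 + 2 * δ * R := by positivity
  have := Real.sqrt_le_sqrt hkey
  rw [Real.sqrt_sq (norm_nonneg _)] at this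
  linarith [Real.sqrt_nonneg (δ ^ 2 + 2 * δ * R)]
end

section
/- Let n ≥ 1, let K ⊆ ℝⁿ be a compact convex set with nonempty interior, and let K_1 ⊆ K_2 ⊆ ⋯ ⊆ K be an increasing sequence of nonempty compact convex sets such that every compact subset of the interior of K is contained in K_i for all sufficiently large i. Then the projections Π_{K_i} converge uniformly to Π_K on compact subsets of ℝⁿ: for every R > 0 and ε > 0 there exists N such that for all i ≥ N and all x ∈ ℝⁿ with ‖x‖ ≤ R, ‖Π_{K_i}(x) − Π_K(x)‖ ≤ ε. -/
open RealInnerProductSpace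

set_option maxHeartbeats 1000000

/-- **Uniform convergence of projections on compacts.**
Let `K ⊆ ℝⁿ` be compact convex with nonempty interior and `K₁ ⊆ K₂ ⊆ ⋯ ⊆ K` an increasing
family of nonempty compact convex sets such that every compact subset of the interior of
`K` is contained in `K_i` for all sufficiently large `i`.  Then the nearest-point
projections onto `K_i` converge uniformly on compacts to the projection onto `K`: for all
`R, ε > 0` there is `N` such that for all `i ≥ N` and `‖x‖ ≤ R`, if `p` is the nearest
point to `x` in `K` and `p'` the nearest point to `x` in `K_i`, then `‖p - p'‖ ≤ ε`. -/
theorem stmt12 (n : ℕ) (hn : 1 ≤ n) (K : Set (EuclideanSpace ℝ (Fin n)))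
    (hKcomp : IsCompact K) (hKconv : Convex ℝ K) (hKint : (interior K).Nonempty)
    (Ks : ℕ → Set (EuclideanSpace ℝ (Fin n)))
    (hmono : Monotone Ks) (hsub : ∀ i, Ks i ⊆ K)
    (hKscomp : ∀ i, IsCompact (Ks i)) (hKsconv : ∀ i, Convex ℝ (Ks i))
    (hKsne : ∀ i, (Ks i).Nonempty)
    (habsorb : ∀ S : Set (EuclideanSpace ℝ (Fin n)),
      IsCompact S → S ⊆ interior K → ∃ N, ∀ i ≥ N, S ⊆ Ks i) :
    ∀ R > (0 : ℝ), ∀ ε > (0 : ℝ), ∃ N, ∀ i ≥ N,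
      ∀ x : EuclideanSpace ℝ (Fin n), ‖x‖ ≤ R →
        ∀ p p' : EuclideanSpace ℝ (Fin n),
          (p ∈ K ∧ ∀ z ∈ K, ‖x - p‖ ≤ ‖x - z‖) →
          (p' ∈ Ks i ∧ ∀ z ∈ Ks i, ‖x - p'‖ ≤ ‖x - z‖) →
          ‖p - p'‖ ≤ ε := by
  intro R hR ε hε
  obtain ⟨c, hc⟩ := hKint
  -- bound on K
  obtain ⟨M0, hM0⟩ := isBounded_iff_forall_norm_le.mp hKcomp.isBounded
  set M : ℝ := max M0 0 with hMdef
  have hM : ∀ y ∈ K, ‖y‖ ≤ M := fun y hy => (hM0 y hy).trans (le_max_left _ _)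
  have hMnn : (0:ℝ) ≤ M := le_max_right _ _
  set E : ℝ := 2 * (2*M) * (R + M) + (2*M)^2 with hEdef
  have hEnn : 0 ≤ E := by positivity
  set δ : ℝ := min 1 (ε^2 / (E + 1)) with hδdef
  have hδpos : 0 < δ := lt_min one_pos (by positivity)
  have hδ1 : δ ≤ 1 := min_le_left _ _
  have hδE : δ * (E + 1) ≤ ε ^ 2 := by
    have h1 : δ ≤ ε^2 / (E+1) := min_le_right _ _
    have h2 : (0:ℝ) < E + 1 := by linarith
    calc δ * (E+1) ≤ (ε^2/(E+1)) * (E+1) := by nlinarith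
    _ = ε^2 := by field_simp
  -- the shrunken set
  set S : Set (EuclideanSpace ℝ (Fin n)) := (fun y => (1-δ) • y + δ • c) '' K with hSdef
  have hScomp : IsCompact S := hKcomp.image (by fun_prop)
  have hSint : S ⊆ interior K := by
    rintro _ ⟨y, hy, rfl⟩
    exact hKconv.combo_self_interior_mem_interior hy hc (by linarith) hδpos (by ring)
  obtain ⟨N, hN⟩ := habsorb S hScomp hSint
  refine ⟨N, fun i hi x hx p p' ⟨hpK, hpmin⟩ ⟨hp'K, hp'min⟩ => ?_⟩
  -- projection inequality: ⟪x - p, p' - p⟫ ≤ 0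
  have hp'inK : p' ∈ K := hsub i hp'K
  haveI : Nonempty K := ⟨⟨p, hpK⟩⟩
  have hiInf : ‖x - p‖ = ⨅ w : K, ‖x - w‖ := by
    apply le_antisymm
    · exact le_ciInf fun w => hpmin w w.2
    · have hb : BddBelow (Set.range fun w : K => ‖x - (w : EuclideanSpace ℝ (Fin n))‖) :=
        ⟨0, by rintro _ ⟨w, rfl⟩; positivity⟩
      exact ciInf_le hb ⟨p, hpK⟩
  have hinner : ⟪x - p, p' - p⟫ ≤ 0 :=
    (norm_eq_iInf_iff_real_inner_le_zero hKconv hpK).mp hiInf p' hp'inK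
  -- the comparison point q
  have hq : (1-δ) • p + δ • c ∈ Ks i := hN i hi ⟨p, hpK, rfl⟩
  have h1 : ‖x - p'‖ ≤ ‖x - ((1-δ) • p + δ • c)‖ := hp'min _ hq
  have h2 : ‖x - ((1-δ) • p + δ • c)‖ ≤ ‖x - p‖ + δ * ‖p - c‖ := by
    have : x - ((1-δ) • p + δ • c) = (x - p) + δ • (p - c) := by
      rw [smul_sub, sub_smul, one_smul]; abel
    rw [this]
    calc ‖(x - p) + δ • (p - c)‖ ≤ ‖x - p‖ + ‖δ • (p - c)‖ := norm_add_le _ _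
    _ = ‖x - p‖ + δ * ‖p - c‖ := by
        rw [norm_smul, Real.norm_eq_abs, abs_of_pos hδpos]
  have hcK : c ∈ K := interior_subset hc
  have hpc : ‖p - c‖ ≤ 2 * M := by
    calc ‖p - c‖ ≤ ‖p‖ + ‖c‖ := norm_sub_le _ _
    _ ≤ M + M := add_le_add (hM p hpK) (hM c hcK)
    _ = 2 * M := by ring
  have hxp : ‖x - p‖ ≤ R + M := by
    calc ‖x - p‖ ≤ ‖x‖ + ‖p‖ := norm_sub_le _ _
    _ ≤ R + M := add_le_add hx (hM p hpK)
  -- expansion of the square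
  have key : ‖x - p'‖^2 = ‖x - p‖^2 - 2 * ⟪x - p, p' - p⟫ + ‖p' - p‖^2 := by
    rw [show x - p' = (x - p) - (p' - p) by abel]
    exact norm_sub_sq_real _ _
  have hxp' : ‖x - p'‖ ≤ ‖x - p‖ + δ * ‖p - c‖ := h1.trans h2
  have hnn1 : (0:ℝ) ≤ ‖x - p'‖ := norm_nonneg _
  have hnn2 : (0:ℝ) ≤ ‖x - p‖ := norm_nonneg _
  have hnn3 : (0:ℝ) ≤ ‖p' - p‖ := norm_nonneg _
  have hA : ‖x - p'‖^2 ≤ (‖x - p‖ + δ * ‖p - c‖)^2 := pow_le_pow_left₀ hnn1 hxp' 2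
  have hB : ‖p' - p‖^2 ≤ 2*δ*(‖x - p‖*‖p - c‖) + δ^2*‖p - c‖^2 := by nlinarith
  have hC : ‖x - p‖*‖p - c‖ ≤ (R+M)*(2*M) :=
    mul_le_mul hxp hpc (norm_nonneg _) (by linarith)
  have hD : ‖p - c‖^2 ≤ (2*M)^2 := by nlinarith [norm_nonneg (p - c)]
  have hδδ : δ^2 ≤ δ := by nlinarith
  have hE1 : δ^2*‖p - c‖^2 ≤ δ*(2*M)^2 :=
    mul_le_mul hδδ hD (sq_nonneg _) hδpos.le
  have hE2 : 2*δ*(‖x - p‖*‖p - c‖) ≤ 2*δ*((R+M)*(2*M)) :=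
    mul_le_mul_of_nonneg_left hC (by positivity)
  have hsq : ‖p' - p‖^2 ≤ ε^2 := by nlinarith
  have : ‖p' - p‖ ≤ ε := by nlinarith
  rwa [norm_sub_rev]
end

section
/- Let p, q : ℝ → ℝ be continuous monotone nondecreasing functions, let μ_p and μ_q be their associated Lebesgue–Stieltjes measures, define x(s) = p(s) − q(s), and let t > 0 be such that x(s) ≥ 0 for all s ∈ [0, t]. Then, as ε ↓ 0, the quantity μ_p({s ∈ (0,t] : x(s) ≥ ε}) − μ_q({s ∈ (0,t] : x(s) ≥ ε}) converges to x(t) − x(0). (Equivalently, x(t) − x(0) = lim_{ε↓0} ∫_{(0,t]} 1{x(s) ≥ ε} dx(s), where the Stieltjes integral of the bounded-variation function x is the difference of the integrals against μ_p and μ_q.) -/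
open MeasureTheory Filter Set Topology

namespace Stmt13Aux


lemma meas_singleton (u : ℝ → ℝ) (huc : Continuous u) (μ : Measure ℝ)
    (hμ : ∀ a b : ℝ, a ≤ b → μ (Set.Ioc a b) = ENNReal.ofReal (u b - u a)) (a : ℝ) :
    μ {a} = 0 := by
  have h1 : ∀ δ : ℝ, 0 < δ → μ {a} ≤ ENNReal.ofReal (u a - u (a - δ)) := by
    intro δ hδ
    rw [← hμ (a - δ) a (by linarith)]
    exact measure_mono (by simp [Set.singleton_subset_iff, hδ])
  have hc : Continuous fun δ : ℝ => ENNReal.ofReal (u a - u (a - δ)) :=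
    ENNReal.continuous_ofReal.comp
      (continuous_const.sub (huc.comp (continuous_const.sub continuous_id)))
  have h2 : Tendsto (fun δ : ℝ => ENNReal.ofReal (u a - u (a - δ))) (𝓝[>] 0) (𝓝 0) := by
    have := hc.tendsto' 0 0 (by simp)
    exact this.mono_left nhdsWithin_le_nhds
  have h3 : μ {a} ≤ 0 :=
    ge_of_tendsto h2 (eventually_nhdsWithin_of_forall fun δ hδ => h1 δ hδ)
  simpa using h3

lemma meas_Ioo (u : ℝ → ℝ) (huc : Continuous u) (μ : Measure ℝ)
    (hμ : ∀ a b : ℝ, a ≤ b → μ (Set.Ioc a b) = ENNReal.ofReal (u b - u a))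
    {a b : ℝ} (hab : a ≤ b) :
    μ (Set.Ioo a b) = ENNReal.ofReal (u b - u a) := by
  refine le_antisymm ((measure_mono Set.Ioo_subset_Ioc_self).trans (hμ a b hab).le) ?_
  have hsub : Set.Ioc a b ⊆ Set.Ioo a b ∪ {b} := by
    intro y hy
    rcases lt_or_eq_of_le hy.2 with h | h
    · exact Or.inl ⟨hy.1, h⟩
    · exact Or.inr (by simp [h])
  calc ENNReal.ofReal (u b - u a) = μ (Set.Ioc a b) := (hμ a b hab).symm
    _ ≤ μ (Set.Ioo a b ∪ {b}) := measure_mono hsub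
    _ ≤ μ (Set.Ioo a b) + μ {b} := measure_union_le _ _
    _ = μ (Set.Ioo a b) := by rw [meas_singleton u huc μ hμ b, add_zero]



lemma cover (w : ℝ → ℝ) (hwc : Continuous w) (t ε : ℝ) (ht : 0 < t)
    (K : Set ℝ) (hK : IsCompact K)
    (hKE : K ⊆ Set.Ioo 0 t ∩ {s | w s < ε}) :
    ∃ G : Finset (ℝ × ℝ),
      (K ⊆ ⋃ g ∈ G, Set.Ioo g.1 g.2) ∧
      ((G : Set (ℝ × ℝ)).Pairwise fun g h => Disjoint (Set.Ioo g.1 g.2) (Set.Ioo h.1 h.2)) ∧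
      (∀ g ∈ G, 0 ≤ g.1 ∧ g.1 < g.2 ∧ g.2 ≤ t ∧ Set.Ioo g.1 g.2 ⊆ {s | w s < ε}
        ∧ w g.1 ≤ ε ∧ w g.2 ≤ ε ∧ (g.1 = 0 ∨ w g.1 = ε) ∧ (g.2 = t ∨ w g.2 = ε)) := by
  classical
  set E : Set ℝ := Set.Ioo 0 t ∩ {s | w s < ε} with hEdef
  have hEopen : IsOpen E := isOpen_Ioo.inter (isOpen_lt hwc continuous_const)
  have hEc : IsClosed Eᶜ := hEopen.isClosed_compl
  have h0E : (0 : ℝ) ∉ E := fun h => lt_irrefl 0 h.1.1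
  have htE : t ∉ E := fun h => lt_irrefl t h.1.2
  set a : ℝ → ℝ := fun s => sSup (Eᶜ ∩ Set.Iio s) with hadef
  set b : ℝ → ℝ := fun s => sInf (Eᶜ ∩ Set.Ioi s) with hbdef
  -- basic facts for s ∈ E
  have hane : ∀ s ∈ E, (Eᶜ ∩ Set.Iio s).Nonempty := fun s hs => ⟨0, h0E, hs.1.1⟩
  have habdd : ∀ s : ℝ, BddAbove (Eᶜ ∩ Set.Iio s) := fun s => ⟨s, fun y hy => hy.2.le⟩
  have hbne : ∀ s ∈ E, (Eᶜ ∩ Set.Ioi s).Nonempty := fun s hs => ⟨t, htE, hs.1.2⟩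
  have hbbdd : ∀ s : ℝ, BddBelow (Eᶜ ∩ Set.Ioi s) := fun s => ⟨s, fun y hy => hy.2.le⟩
  have haC : ∀ s ∈ E, a s ∉ E := by
    intro s hs
    exact fun h =>
      (hEc.closure_subset
        ((closure_mono Set.inter_subset_left) (csSup_mem_closure (hane s hs) (habdd s)))) h
  have hbC : ∀ s ∈ E, b s ∉ E := by
    intro s hs
    exact fun h =>
      (hEc.closure_subset
        ((closure_mono Set.inter_subset_left) (csInf_mem_closure (hbne s hs) (hbbdd s)))) h
  have ha_lt : ∀ s ∈ E, a s < s := by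
    intro s hs
    have hle : a s ≤ s := csSup_le (hane s hs) fun y hy => hy.2.le
    rcases lt_or_eq_of_le hle with h | h
    · exact h
    · exact absurd (show a s ∈ E by rw [h]; exact hs) (haC s hs)
  have hb_gt : ∀ s ∈ E, s < b s := by
    intro s hs
    have hle : s ≤ b s := le_csInf (hbne s hs) fun y hy => hy.2.le
    rcases lt_or_eq_of_le hle with h | h
    · exact h
    · exact absurd (show b s ∈ E by rw [← h]; exact hs) (hbC s hs)
  have ha0 : ∀ s ∈ E, 0 ≤ a s := fun s hs => le_csSup (habdd s) ⟨h0E, hs.1.1⟩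
  have hbt : ∀ s ∈ E, b s ≤ t := fun s hs => csInf_le (hbbdd s) ⟨htE, hs.1.2⟩
  have hint : ∀ s ∈ E, Set.Ioo (a s) (b s) ⊆ E := by
    intro s hs y hy
    by_contra hyC
    rcases lt_trichotomy y s with h | h | h
    · exact absurd (le_csSup (habdd s) ⟨hyC, h⟩) (not_le.2 hy.1)
    · exact hyC (h ▸ hs)
    · exact absurd (csInf_le (hbbdd s) ⟨hyC, h⟩) (not_le.2 hy.2)
  have hwa : ∀ s ∈ E, w (a s) ≤ ε := by
    intro s hs
    have hmem : Set.Ioo (a s) (b s) ∈ 𝓝[>] (a s) :=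
      Ioo_mem_nhdsGT_of_mem ⟨le_rfl, (ha_lt s hs).trans (hb_gt s hs)⟩
    exact le_of_tendsto ((hwc.tendsto (a s)).mono_left nhdsWithin_le_nhds)
      (eventually_of_mem hmem fun y hy => (hint s hs hy).2.le)
  have hwb : ∀ s ∈ E, w (b s) ≤ ε := by
    intro s hs
    have hmem : Set.Ioo (a s) (b s) ∈ 𝓝[<] (b s) :=
      Ioo_mem_nhdsLT_of_mem ⟨(ha_lt s hs).trans (hb_gt s hs), le_rfl⟩
    exact le_of_tendsto ((hwc.tendsto (b s)).mono_left nhdsWithin_le_nhds)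
      (eventually_of_mem hmem fun y hy => (hint s hs hy).2.le)
  have ha_alt : ∀ s ∈ E, a s = 0 ∨ w (a s) = ε := by
    intro s hs
    rcases eq_or_lt_of_le (ha0 s hs) with h | h
    · exact Or.inl h.symm
    · refine Or.inr (le_antisymm (hwa s hs) ?_)
      by_contra hlt
      exact haC s hs ⟨⟨h, (ha_lt s hs).trans hs.1.2⟩, not_le.1 hlt⟩
  have hb_alt : ∀ s ∈ E, b s = t ∨ w (b s) = ε := by
    intro s hs
    rcases eq_or_lt_of_le (hbt s hs) with h | h
    · exact Or.inl h
    · refine Or.inr (le_antisymm (hwb s hs) ?_)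
      by_contra hlt
      exact hbC s hs ⟨⟨hs.1.1.trans (hb_gt s hs), h⟩, not_le.1 hlt⟩
  -- equal or disjoint
  have hao : ∀ s₁ ∈ E, ∀ s₂ ∈ E, ∀ y, y ∈ Set.Ioo (a s₁) (b s₁) → y ∈ Set.Ioo (a s₂) (b s₂) →
      a s₂ ≤ a s₁ := by
    intro s₁ hs₁ s₂ hs₂ y hy₁ hy₂
    by_contra hlt
    exact haC s₂ hs₂ (hint s₁ hs₁ ⟨not_le.1 hlt, hy₂.1.trans hy₁.2⟩)
  have hbo : ∀ s₁ ∈ E, ∀ s₂ ∈ E, ∀ y, y ∈ Set.Ioo (a s₁) (b s₁) → y ∈ Set.Ioo (a s₂) (b s₂) →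
      b s₁ ≤ b s₂ := by
    intro s₁ hs₁ s₂ hs₂ y hy₁ hy₂
    by_contra hlt
    exact hbC s₂ hs₂ (hint s₁ hs₁ ⟨hy₁.1.trans hy₂.2, not_le.1 hlt⟩)
  have hed : ∀ s₁ ∈ E, ∀ s₂ ∈ E,
      ¬ Disjoint (Set.Ioo (a s₁) (b s₁)) (Set.Ioo (a s₂) (b s₂)) →
      a s₁ = a s₂ ∧ b s₁ = b s₂ := by
    intro s₁ hs₁ s₂ hs₂ hnd
    obtain ⟨y, hy₁, hy₂⟩ := Set.not_disjoint_iff.1 hnd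
    exact ⟨le_antisymm (hao s₂ hs₂ s₁ hs₁ y hy₂ hy₁) (hao s₁ hs₁ s₂ hs₂ y hy₁ hy₂),
      le_antisymm (hbo s₁ hs₁ s₂ hs₂ y hy₁ hy₂) (hbo s₂ hs₂ s₁ hs₁ y hy₂ hy₁)⟩
  -- compactness
  have hcov : K ⊆ ⋃ s ∈ E, Set.Ioo (a s) (b s) := by
    intro k hk
    have hkE : k ∈ E := hKE hk
    exact Set.mem_biUnion hkE ⟨ha_lt k hkE, hb_gt k hkE⟩
  obtain ⟨F, hFE, hFfin, hKF⟩ :=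
    hK.elim_finite_subcover_image (fun s _ => isOpen_Ioo) hcov
  set G : Finset (ℝ × ℝ) := (hFfin.image fun s => (a s, b s)).toFinset with hGdef
  have hmemG : ∀ g : ℝ × ℝ, g ∈ G ↔ ∃ s ∈ F, (a s, b s) = g := by
    intro g
    simp only [hGdef, Set.Finite.mem_toFinset, Set.mem_image]
  refine ⟨G, ?_, ?_, ?_⟩
  · intro k hk
    obtain ⟨s, hsF, hks⟩ := Set.mem_iUnion₂.1 (hKF hk)
    exact Set.mem_iUnion₂.2 ⟨(a s, b s), (hmemG _).2 ⟨s, hsF, rfl⟩, hks⟩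
  · intro g hg h hh hgh
    obtain ⟨s₁, hs₁F, hgs⟩ := (hmemG g).1 hg
    obtain ⟨s₂, hs₂F, hhs⟩ := (hmemG h).1 hh
    subst hgs; subst hhs
    by_contra hnd
    obtain ⟨h1, h2⟩ := hed s₁ (hFE hs₁F) s₂ (hFE hs₂F) hnd
    exact hgh (by rw [h1, h2])
  · intro g hg
    obtain ⟨s, hsF, hgs⟩ := (hmemG g).1 hg
    subst hgs
    have hsE : s ∈ E := hFE hsF
    exact ⟨ha0 s hsE, (ha_lt s hsE).trans (hb_gt s hsE), hbt s hsE,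
      fun y hy => (hint s hsE hy).2, hwa s hsE, hwb s hsE, ha_alt s hsE, hb_alt s hsE⟩

lemma key (u v : ℝ → ℝ) (huc : Continuous u) (hvc : Continuous v)
    (hum : Monotone u) (hvm : Monotone v)
    (μu μv : Measure ℝ)
    (hμu : ∀ a b : ℝ, a ≤ b → μu (Set.Ioc a b) = ENNReal.ofReal (u b - u a))
    (hμv : ∀ a b : ℝ, a ≤ b → μv (Set.Ioc a b) = ENNReal.ofReal (v b - v a))
    (t ε : ℝ) (ht : 0 < t) (hε : 0 < ε)
    (hw0 : ∀ s ∈ Set.Icc (0:ℝ) t, 0 ≤ u s - v s) :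
    μu (Set.Ioo 0 t ∩ {s | u s - v s < ε})
      ≤ μv (Set.Ioo 0 t ∩ {s | u s - v s < ε}) + ENNReal.ofReal ε
    ∧ μv (Set.Ioo 0 t ∩ {s | u s - v s < ε})
      ≤ μu (Set.Ioo 0 t ∩ {s | u s - v s < ε}) + ENNReal.ofReal ε := by
  classical
  haveI : IsLocallyFiniteMeasure μu :=
    ⟨fun x0 => ⟨Set.Ioc (x0 - 1) (x0 + 1), Ioc_mem_nhds (by linarith) (by linarith),
      by rw [hμu _ _ (by linarith)]; exact ENNReal.ofReal_lt_top⟩⟩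
  haveI : IsLocallyFiniteMeasure μv :=
    ⟨fun x0 => ⟨Set.Ioc (x0 - 1) (x0 + 1), Ioc_mem_nhds (by linarith) (by linarith),
      by rw [hμv _ _ (by linarith)]; exact ENNReal.ofReal_lt_top⟩⟩
  set w : ℝ → ℝ := fun s => u s - v s with hwdef
  set E : Set ℝ := Set.Ioo 0 t ∩ {s | w s < ε} with hEdef
  have hEopen : IsOpen E := isOpen_Ioo.inter (isOpen_lt (huc.sub hvc) continuous_const)
  have main : ∀ K : Set ℝ, K ⊆ E → IsCompact K →
      μu K ≤ μv E + ENNReal.ofReal ε ∧ μv K ≤ μu E + ENNReal.ofReal ε := by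
    intro K hKE hKc
    obtain ⟨G, hcov, hdisj, hprops⟩ := cover w (huc.sub hvc) t ε ht K hKc hKE
    have hle : ∀ g ∈ G, g.1 ≤ g.2 := fun g hg => (hprops g hg).2.1.le
    have hIooE : ∀ g ∈ G, Set.Ioo g.1 g.2 ⊆ E := by
      intro g hg y hy
      exact ⟨Set.Ioo_subset_Ioo (hprops g hg).1 (hprops g hg).2.2.1 hy,
        (hprops g hg).2.2.2.1 hy⟩
    -- uniqueness of special intervals
    have huniq0 : ∀ g ∈ G, ∀ h ∈ G, g.1 = 0 → h.1 = 0 → g = h := by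
      intro g hg h hh hg0 hh0
      by_contra hne
      have hd := hdisj hg hh hne
      have hgpos : (0:ℝ) < g.2 := hg0 ▸ (hprops g hg).2.1
      have hhpos : (0:ℝ) < h.2 := hh0 ▸ (hprops h hh).2.1
      have hmin : 0 < min g.2 h.2 := lt_min hgpos hhpos
      have hl := min_le_left g.2 h.2
      have hr := min_le_right g.2 h.2
      refine Set.not_disjoint_iff.2 ⟨min g.2 h.2 / 2, Set.mem_Ioo.2 ⟨?_, ?_⟩, Set.mem_Ioo.2 ⟨?_, ?_⟩⟩ hd
      · rw [hg0]; linarith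
      · linarith
      · rw [hh0]; linarith
      · linarith
    have huniqt : ∀ g ∈ G, ∀ h ∈ G, g.2 = t → h.2 = t → g = h := by
      intro g hg h hh hgt hht
      by_contra hne
      have hd := hdisj hg hh hne
      have hglt : g.1 < t := hgt ▸ (hprops g hg).2.1
      have hhlt : h.1 < t := hht ▸ (hprops h hh).2.1
      have hmax : max g.1 h.1 < t := max_lt hglt hhlt
      have hl := le_max_left g.1 h.1
      have hr := le_max_right g.1 h.1
      refine Set.not_disjoint_iff.2 ⟨(max g.1 h.1 + t) / 2, Set.mem_Ioo.2 ⟨?_, ?_⟩, Set.mem_Ioo.2 ⟨?_, ?_⟩⟩ hd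
      · linarith
      · rw [hgt]; linarith
      · linarith
      · rw [hht]; linarith
    -- real sum bounds
    have hsum1 : ∑ g ∈ G, (w g.2 - w g.1) ≤ ε := by
      have hsplit := Finset.sum_filter_add_sum_filter_not G (fun g => g.1 = 0)
        (fun g => w g.2 - w g.1)
      have h2 : ∑ g ∈ G.filter (fun g => ¬ g.1 = 0), (w g.2 - w g.1) ≤ 0 := by
        refine Finset.sum_nonpos fun g hg => ?_
        obtain ⟨hgG, hg0⟩ := Finset.mem_filter.1 hg
        have hwg1 : w g.1 = ε := ((hprops g hgG).2.2.2.2.2.2.1).resolve_left hg0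
        have hwg2 : w g.2 ≤ ε := (hprops g hgG).2.2.2.2.2.1
        linarith
      have h1 : ∑ g ∈ G.filter (fun g => g.1 = 0), (w g.2 - w g.1) ≤ ε := by
        have hcard : (G.filter (fun g => g.1 = 0)).card ≤ 1 :=
          Finset.card_le_one.2 fun g hg h hh =>
            huniq0 g (Finset.mem_filter.1 hg).1 h (Finset.mem_filter.1 hh).1
              (Finset.mem_filter.1 hg).2 (Finset.mem_filter.1 hh).2
        have hterm : ∀ g ∈ G.filter (fun g => g.1 = 0), w g.2 - w g.1 ≤ ε := by
          intro g hg
          obtain ⟨hgG, hg0⟩ := Finset.mem_filter.1 hg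
          have hwg2 : w g.2 ≤ ε := (hprops g hgG).2.2.2.2.2.1
          have hw1 : 0 ≤ w g.1 := by
            rw [hg0]; exact hw0 0 ⟨le_rfl, ht.le⟩
          linarith
        calc ∑ g ∈ G.filter (fun g => g.1 = 0), (w g.2 - w g.1)
            ≤ (G.filter (fun g => g.1 = 0)).card • ε := Finset.sum_le_card_nsmul _ _ _ hterm
          _ = ((G.filter (fun g => g.1 = 0)).card : ℝ) * ε := nsmul_eq_mul _ _
          _ ≤ 1 * ε := by
              refine mul_le_mul_of_nonneg_right ?_ hε.le
              exact_mod_cast hcard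
          _ = ε := one_mul ε
      linarith [hsplit]
    have hsum2 : ∑ g ∈ G, (w g.1 - w g.2) ≤ ε := by
      have hsplit := Finset.sum_filter_add_sum_filter_not G (fun g => g.2 = t)
        (fun g => w g.1 - w g.2)
      have h2 : ∑ g ∈ G.filter (fun g => ¬ g.2 = t), (w g.1 - w g.2) ≤ 0 := by
        refine Finset.sum_nonpos fun g hg => ?_
        obtain ⟨hgG, hgt⟩ := Finset.mem_filter.1 hg
        have hwg2 : w g.2 = ε := ((hprops g hgG).2.2.2.2.2.2.2).resolve_left hgt
        have hwg1 : w g.1 ≤ ε := (hprops g hgG).2.2.2.2.1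
        linarith
      have h1 : ∑ g ∈ G.filter (fun g => g.2 = t), (w g.1 - w g.2) ≤ ε := by
        have hcard : (G.filter (fun g => g.2 = t)).card ≤ 1 :=
          Finset.card_le_one.2 fun g hg h hh =>
            huniqt g (Finset.mem_filter.1 hg).1 h (Finset.mem_filter.1 hh).1
              (Finset.mem_filter.1 hg).2 (Finset.mem_filter.1 hh).2
        have hterm : ∀ g ∈ G.filter (fun g => g.2 = t), w g.1 - w g.2 ≤ ε := by
          intro g hg
          obtain ⟨hgG, hgt⟩ := Finset.mem_filter.1 hg
          have hwg1 : w g.1 ≤ ε := (hprops g hgG).2.2.2.2.1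
          have hw2 : 0 ≤ w g.2 := by
            rw [hgt]; exact hw0 t ⟨ht.le, le_rfl⟩
          linarith
        calc ∑ g ∈ G.filter (fun g => g.2 = t), (w g.1 - w g.2)
            ≤ (G.filter (fun g => g.2 = t)).card • ε := Finset.sum_le_card_nsmul _ _ _ hterm
          _ = ((G.filter (fun g => g.2 = t)).card : ℝ) * ε := nsmul_eq_mul _ _
          _ ≤ 1 * ε := by
              refine mul_le_mul_of_nonneg_right ?_ hε.le
              exact_mod_cast hcard
          _ = ε := one_mul ε
      linarith [hsplit]
    -- ENNReal chains
    have hchain : ∀ (μ₁ μ₂ : Measure ℝ) (f₁ f₂ : ℝ → ℝ), Monotone f₁ → Monotone f₂ →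
        Continuous f₁ → Continuous f₂ →
        (∀ a b : ℝ, a ≤ b → μ₁ (Set.Ioc a b) = ENNReal.ofReal (f₁ b - f₁ a)) →
        (∀ a b : ℝ, a ≤ b → μ₂ (Set.Ioc a b) = ENNReal.ofReal (f₂ b - f₂ a)) →
        (∑ g ∈ G, ((f₁ g.2 - f₁ g.1) - (f₂ g.2 - f₂ g.1)) ≤ ε) →
        μ₁ K ≤ μ₂ E + ENNReal.ofReal ε := by
      intro μ₁ μ₂ f₁ f₂ hm₁ hm₂ hc₁ hc₂ hμ₁ hμ₂ hS
      calc μ₁ K ≤ μ₁ (⋃ g ∈ G, Set.Ioo g.1 g.2) := measure_mono hcov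
        _ ≤ ∑ g ∈ G, μ₁ (Set.Ioo g.1 g.2) := measure_biUnion_finset_le _ _
        _ = ∑ g ∈ G, ENNReal.ofReal (f₁ g.2 - f₁ g.1) :=
            Finset.sum_congr rfl fun g hg => meas_Ioo f₁ hc₁ μ₁ hμ₁ (hle g hg)
        _ = ENNReal.ofReal (∑ g ∈ G, (f₁ g.2 - f₁ g.1)) :=
            (ENNReal.ofReal_sum_of_nonneg fun g hg => sub_nonneg.2 (hm₁ (hle g hg))).symm
        _ ≤ ENNReal.ofReal ((∑ g ∈ G, (f₂ g.2 - f₂ g.1)) + ε) := by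
            refine ENNReal.ofReal_le_ofReal ?_
            have : ∑ g ∈ G, (f₁ g.2 - f₁ g.1)
                = (∑ g ∈ G, (f₂ g.2 - f₂ g.1)) + ∑ g ∈ G, ((f₁ g.2 - f₁ g.1) - (f₂ g.2 - f₂ g.1)) := by
              rw [← Finset.sum_add_distrib]
              exact Finset.sum_congr rfl fun g _ => by ring
            linarith
        _ ≤ ENNReal.ofReal (∑ g ∈ G, (f₂ g.2 - f₂ g.1)) + ENNReal.ofReal ε :=
            ENNReal.ofReal_add_le
        _ = (∑ g ∈ G, ENNReal.ofReal (f₂ g.2 - f₂ g.1)) + ENNReal.ofReal ε := by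
            rw [ENNReal.ofReal_sum_of_nonneg fun g hg => sub_nonneg.2 (hm₂ (hle g hg))]
        _ = (∑ g ∈ G, μ₂ (Set.Ioo g.1 g.2)) + ENNReal.ofReal ε := by
            rw [Finset.sum_congr rfl fun g hg => meas_Ioo f₂ hc₂ μ₂ hμ₂ (hle g hg)]
        _ = μ₂ (⋃ g ∈ G, Set.Ioo g.1 g.2) + ENNReal.ofReal ε := by
            rw [measure_biUnion_finset hdisj fun g _ => measurableSet_Ioo]
        _ ≤ μ₂ E + ENNReal.ofReal ε := by
            gcongr
            exact Set.iUnion₂_subset hIooE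
    constructor
    · refine hchain μu μv u v hum hvm huc hvc hμu hμv ?_
      have : ∀ g : ℝ × ℝ, (u g.2 - u g.1) - (v g.2 - v g.1) = w g.2 - w g.1 := fun g => by
        simp only [hwdef]; ring
      rw [Finset.sum_congr rfl fun g _ => this g]
      exact hsum1
    · refine hchain μv μu v u hvm hum hvc huc hμv hμu ?_
      have : ∀ g : ℝ × ℝ, (v g.2 - v g.1) - (u g.2 - u g.1) = w g.1 - w g.2 := fun g => by
        simp only [hwdef]; ring
      rw [Finset.sum_congr rfl fun g _ => this g]
      exact hsum2
  constructor
  · rw [hEopen.measure_eq_iSup_isCompact]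
    exact iSup_le fun K => iSup_le fun hKE => iSup_le fun hKc => (main K hKE hKc).1
  · rw [hEopen.measure_eq_iSup_isCompact]
    exact iSup_le fun K => iSup_le fun hKE => iSup_le fun hKc => (main K hKE hKc).2


end Stmt13Aux


open Stmt13Aux

/-- **Stieltjes integration away from zero.**
Let `p, q : ℝ → ℝ` be continuous monotone nondecreasing with Lebesgue–Stieltjes measures
`μ_p, μ_q` (characterized by `μ_p (a,b] = p b - p a`), set `x = p - q`, and let `t > 0` be
such that `x ≥ 0` on `[0, t]`.  Then, as `ε ↓ 0`,
`μ_p {s ∈ (0,t] | x s ≥ ε} - μ_q {s ∈ (0,t] | x s ≥ ε} → x t - x 0`. -/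
theorem stmt13 (p q : ℝ → ℝ) (hpc : Continuous p) (hqc : Continuous q)
    (hpm : Monotone p) (hqm : Monotone q)
    (μp μq : Measure ℝ)
    (hμp : ∀ a b : ℝ, a ≤ b → μp (Set.Ioc a b) = ENNReal.ofReal (p b - p a))
    (hμq : ∀ a b : ℝ, a ≤ b → μq (Set.Ioc a b) = ENNReal.ofReal (q b - q a))
    (t : ℝ) (ht : 0 < t)
    (hnn : ∀ s ∈ Set.Icc (0 : ℝ) t, 0 ≤ p s - q s) :
    Tendsto (fun ε : ℝ =>
        (μp {s ∈ Set.Ioc (0 : ℝ) t | ε ≤ p s - q s}).toReal -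
        (μq {s ∈ Set.Ioc (0 : ℝ) t | ε ≤ p s - q s}).toReal)
      (nhdsWithin 0 (Set.Ioi 0))
      (nhds ((p t - q t) - (p 0 - q 0))) := by
  set L : ℝ := (p t - q t) - (p 0 - q 0) with hLdef
  have hbound : ∀ ε : ℝ, ε ∈ Set.Ioi (0:ℝ) →
      L - ε ≤ (μp {s ∈ Set.Ioc (0 : ℝ) t | ε ≤ p s - q s}).toReal -
        (μq {s ∈ Set.Ioc (0 : ℝ) t | ε ≤ p s - q s}).toReal ∧
      (μp {s ∈ Set.Ioc (0 : ℝ) t | ε ≤ p s - q s}).toReal -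
        (μq {s ∈ Set.Ioc (0 : ℝ) t | ε ≤ p s - q s}).toReal ≤ L + ε := by
    intro ε hε
    rw [Set.mem_Ioi] at hε
    set T : Set ℝ := {s | ε ≤ p s - q s} with hTdef
    have hTmeas : MeasurableSet T :=
      measurableSet_le measurable_const (hpc.sub hqc).measurable
    have hA : {s ∈ Set.Ioc (0 : ℝ) t | ε ≤ p s - q s} = Set.Ioc 0 t ∩ T := rfl
    set E : Set ℝ := Set.Ioo 0 t ∩ {s | p s - q s < ε} with hEdef
    -- measure of the complement piece equals measure of E
    have hWsub : Set.Ioc 0 t \ T ⊆ E ∪ {t} := by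
      rintro s ⟨⟨h0, hle⟩, hnT⟩
      rcases lt_or_eq_of_le hle with h | h
      · exact Or.inl ⟨⟨h0, h⟩, show p s - q s < ε from not_le.1 hnT⟩
      · exact Or.inr (by simp [h])
    have hEsub : E ⊆ Set.Ioc 0 t \ T := by
      rintro s ⟨⟨h0, hlt⟩, hw⟩
      exact ⟨⟨h0, hlt.le⟩, show ¬ ε ≤ p s - q s from not_le.2 hw⟩
    have hWp : μp (Set.Ioc 0 t \ T) = μp E :=
      le_antisymm ((measure_mono hWsub).trans ((measure_union_le _ _).trans
        (by rw [meas_singleton p hpc μp hμp t, add_zero]))) (measure_mono hEsub)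
    have hWq : μq (Set.Ioc 0 t \ T) = μq E :=
      le_antisymm ((measure_mono hWsub).trans ((measure_union_le _ _).trans
        (by rw [meas_singleton q hqc μq hμq t, add_zero]))) (measure_mono hEsub)
    -- finiteness
    have hfinp : μp (Set.Ioc 0 t) ≠ ⊤ := by
      rw [hμp 0 t ht.le]; exact ENNReal.ofReal_ne_top
    have hfinq : μq (Set.Ioc 0 t) ≠ ⊤ := by
      rw [hμq 0 t ht.le]; exact ENNReal.ofReal_ne_top
    have hPane : μp (Set.Ioc 0 t ∩ T) ≠ ⊤ :=
      ne_top_of_le_ne_top hfinp (measure_mono Set.inter_subset_left)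
    have hPwne : μp (Set.Ioc 0 t \ T) ≠ ⊤ :=
      ne_top_of_le_ne_top hfinp (measure_mono Set.diff_subset)
    have hQane : μq (Set.Ioc 0 t ∩ T) ≠ ⊤ :=
      ne_top_of_le_ne_top hfinq (measure_mono Set.inter_subset_left)
    have hQwne : μq (Set.Ioc 0 t \ T) ≠ ⊤ :=
      ne_top_of_le_ne_top hfinq (measure_mono Set.diff_subset)
    -- splittings
    have hp_sum : (μp (Set.Ioc 0 t ∩ T)).toReal + (μp (Set.Ioc 0 t \ T)).toReal
        = p t - p 0 := by
      rw [← ENNReal.toReal_add hPane hPwne, measure_inter_add_diff _ hTmeas,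
        hμp 0 t ht.le, ENNReal.toReal_ofReal (sub_nonneg.2 (hpm ht.le))]
    have hq_sum : (μq (Set.Ioc 0 t ∩ T)).toReal + (μq (Set.Ioc 0 t \ T)).toReal
        = q t - q 0 := by
      rw [← ENNReal.toReal_add hQane hQwne, measure_inter_add_diff _ hTmeas,
        hμq 0 t ht.le, ENNReal.toReal_ofReal (sub_nonneg.2 (hqm ht.le))]
    -- key bounds
    obtain ⟨hk1, hk2⟩ := key p q hpc hqc hpm hqm μp μq hμp hμq t ε ht hε hnn
    rw [← hEdef] at hk1 hk2
    have hb1 : (μp (Set.Ioc 0 t \ T)).toReal ≤ (μq (Set.Ioc 0 t \ T)).toReal + ε := by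
      have h := ENNReal.toReal_mono (ENNReal.add_ne_top.2 ⟨hWq ▸ hQwne, ENNReal.ofReal_ne_top⟩)
        (hWp ▸ hWq ▸ hk1 : μp (Set.Ioc 0 t \ T) ≤ μq (Set.Ioc 0 t \ T) + ENNReal.ofReal ε)
      rwa [ENNReal.toReal_add (hWq ▸ hQwne) ENNReal.ofReal_ne_top,
        ENNReal.toReal_ofReal hε.le] at h
    have hb2 : (μq (Set.Ioc 0 t \ T)).toReal ≤ (μp (Set.Ioc 0 t \ T)).toReal + ε := by
      have h := ENNReal.toReal_mono (ENNReal.add_ne_top.2 ⟨hWp ▸ hPwne, ENNReal.ofReal_ne_top⟩)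
        (hWp ▸ hWq ▸ hk2 : μq (Set.Ioc 0 t \ T) ≤ μp (Set.Ioc 0 t \ T) + ENNReal.ofReal ε)
      rwa [ENNReal.toReal_add (hWp ▸ hPwne) ENNReal.ofReal_ne_top,
        ENNReal.toReal_ofReal hε.le] at h
    rw [hA]
    constructor <;> [skip; skip] <;> · simp only [hLdef]; linarith
  have h1 : Tendsto (fun ε : ℝ => L - ε) (𝓝[>] (0:ℝ)) (𝓝 L) :=
    ((continuous_const.sub continuous_id).tendsto' 0 L (by simp [hLdef])).mono_left nhdsWithin_le_nhds
  have h2 : Tendsto (fun ε : ℝ => L + ε) (𝓝[>] (0:ℝ)) (𝓝 L) :=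
    ((continuous_const.add continuous_id).tendsto' 0 L (by simp [hLdef])).mono_left nhdsWithin_le_nhds
  exact tendsto_of_tendsto_of_tendsto_of_le_of_le' h1 h2
    (eventually_nhdsWithin_of_forall fun ε hε => (hbound ε hε).1)
    (eventually_nhdsWithin_of_forall fun ε hε => (hbound ε hε).2)
end
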